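/- arXiv:2409.08336 — 6 statements merged into one kernel-verified Lean document; each statement's English description precedes it below -/
import Mathlib

section
/- Let T be the 4-cycle: the simplicial complex on vertex set {a,b,c,d} whose maximal simplices are {a,b}, {b,c}, {c,d}, {d,a}. Then the Davis complex Dav(T) ⊆ ℝ^4 is homeomorphic to the 2-dimensional torus S¹ × S¹. -/
open scoped Classical

noncomputable section

/-- A family of finsets of `V` is an abstract simplicial complex on the vertex set `V`:
it contains the empty set and all singletons, and is closed under taking subsets. -/
def IsComplex {V : Type*} (F : Set (Finset V)) : Prop :=
  ∅ ∈ F ∧ (∀ v : V, ({v} : Finset V) ∈ F) ∧ ∀ σ ∈ F, ∀ τ : Finset V, τ ⊆ σ → τ ∈ F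

/-- The Davis complex of a family `F` of finsets of `V`: the subset of the cube
`[-1,1]^V ⊆ ℝ^V` of points `x` such that `{v | x v ≠ ±1}` is a member of `F`. -/
def DavSet {V : Type*} (F : Set (Finset V)) : Set (V → ℝ) :=
  {x | (∀ v, x v ∈ Set.Icc (-1 : ℝ) 1) ∧ ∃ σ ∈ F, ∀ v, (x v ≠ -1 ∧ x v ≠ 1) ↔ v ∈ σ}

/-! ### Auxiliary material -/

lemma normalize_smul_eq {E : Type*} [NormedAddCommGroup E] [NormedSpace ℝ E]
    (x : E) (hx : ‖x‖ = 1) (c : ℝ) (hc : 0 < c) : ‖c • x‖⁻¹ • (c • x) = x := by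
  rw [norm_smul, Real.norm_eq_abs, abs_of_pos hc, hx, mul_one, smul_smul,
    inv_mul_cancel₀ hc.ne', one_smul]

/-- A continuous linear equivalence induces a homeomorphism of unit spheres. -/
def sphereHomeoOfCLE {E F : Type*} [NormedAddCommGroup E] [NormedSpace ℝ E]
    [NormedAddCommGroup F] [NormedSpace ℝ F] (L : E ≃L[ℝ] F) :
    Metric.sphere (0 : E) 1 ≃ₜ Metric.sphere (0 : F) 1 where
  toFun x := ⟨‖L x.1‖⁻¹ • L x.1, by
    have hx : ‖(x : E)‖ = 1 := mem_sphere_zero_iff_norm.1 x.2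
    have hne : L x.1 ≠ 0 := by
      simp only [ne_eq, map_eq_zero_iff L L.injective]
      intro h; rw [h] at hx; simp at hx
    have : ‖L x.1‖ ≠ 0 := norm_ne_zero_iff.2 hne
    rw [mem_sphere_zero_iff_norm, norm_smul, Real.norm_eq_abs,
      abs_of_nonneg (inv_nonneg.2 (norm_nonneg _)), inv_mul_cancel₀ this]⟩
  invFun y := ⟨‖L.symm y.1‖⁻¹ • L.symm y.1, by
    have hy : ‖(y : F)‖ = 1 := mem_sphere_zero_iff_norm.1 y.2
    have hne : L.symm y.1 ≠ 0 := by
      simp only [ne_eq, map_eq_zero_iff L.symm L.symm.injective]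
      intro h; rw [h] at hy; simp at hy
    have : ‖L.symm y.1‖ ≠ 0 := norm_ne_zero_iff.2 hne
    rw [mem_sphere_zero_iff_norm, norm_smul, Real.norm_eq_abs,
      abs_of_nonneg (inv_nonneg.2 (norm_nonneg _)), inv_mul_cancel₀ this]⟩
  left_inv x := by
    have hx : ‖(x : E)‖ = 1 := mem_sphere_zero_iff_norm.1 x.2
    have hne : L x.1 ≠ 0 := by
      simp only [ne_eq, map_eq_zero_iff L L.injective]
      intro h; rw [h] at hx; simp at hx
    have hc : (0:ℝ) < ‖L x.1‖⁻¹ := inv_pos.2 (norm_pos_iff.2 hne)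
    ext
    simp only [map_smul, ContinuousLinearEquiv.symm_apply_apply]
    exact normalize_smul_eq _ hx _ hc
  right_inv y := by
    have hy : ‖(y : F)‖ = 1 := mem_sphere_zero_iff_norm.1 y.2
    have hne : L.symm y.1 ≠ 0 := by
      simp only [ne_eq, map_eq_zero_iff L.symm L.symm.injective]
      intro h; rw [h] at hy; simp at hy
    have hc : (0:ℝ) < ‖L.symm y.1‖⁻¹ := inv_pos.2 (norm_pos_iff.2 hne)
    ext
    simp only [map_smul, ContinuousLinearEquiv.apply_symm_apply]
    exact normalize_smul_eq _ hy _ hc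
  continuous_toFun := by
    apply Continuous.subtype_mk
    have h1 : Continuous fun x : Metric.sphere (0:E) 1 => L x.1 :=
      L.continuous.comp continuous_subtype_val
    refine (h1.norm.inv₀ ?_).smul h1
    intro x
    have hx : ‖(x : E)‖ = 1 := mem_sphere_zero_iff_norm.1 x.2
    simp only [ne_eq, norm_eq_zero, map_eq_zero_iff L L.injective]
    intro h; rw [h] at hx; simp at hx
  continuous_invFun := by
    apply Continuous.subtype_mk
    have h1 : Continuous fun y : Metric.sphere (0:F) 1 => L.symm y.1 :=
      L.symm.continuous.comp continuous_subtype_val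
    refine (h1.norm.inv₀ ?_).smul h1
    intro y
    have hy : ‖(y : F)‖ = 1 := mem_sphere_zero_iff_norm.1 y.2
    simp only [ne_eq, norm_eq_zero, map_eq_zero_iff L.symm L.symm.injective]
    intro h; rw [h] at hy; simp at hy

lemma mem_F_iff (σ : Finset (Fin 4)) :
    σ ∈ ({∅, {0}, {1}, {2}, {3}, ({0, 1} : Finset (Fin 4)), {1, 2}, {2, 3}, {3, 0}} :
      Set (Finset (Fin 4))) ↔ ¬(0 ∈ σ ∧ 2 ∈ σ) ∧ ¬(1 ∈ σ ∧ 3 ∈ σ) := by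
  simp only [Set.mem_insert_iff, Set.mem_singleton_iff]
  revert σ; decide

lemma max_abs_eq_one_iff (a b : ℝ) :
    max |a| |b| = 1 ↔ |a| ≤ 1 ∧ |b| ≤ 1 ∧ (|a| = 1 ∨ |b| = 1) := by
  rw [max_eq_iff]
  constructor
  · rintro (⟨h1, h2⟩ | ⟨h1, h2⟩)
    · exact ⟨h1.le, h1 ▸ h2, Or.inl h1⟩
    · exact ⟨h1 ▸ h2, h1.le, Or.inr h1⟩
  · rintro ⟨h1, h2, h3 | h3⟩
    · exact Or.inl ⟨h3, h3 ▸ h2⟩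
    · exact Or.inr ⟨h3, h3 ▸ h1⟩

lemma mem_davset_iff (F : Set (Finset (Fin 4)))
    (hF : F = {∅, {0}, {1}, {2}, {3}, ({0, 1} : Finset (Fin 4)), {1, 2}, {2, 3}, {3, 0}})
    (x : Fin 4 → ℝ) :
    x ∈ DavSet F ↔
      ((x 0, x 2) ∈ Metric.sphere (0 : ℝ × ℝ) 1 ∧ (x 1, x 3) ∈ Metric.sphere (0 : ℝ × ℝ) 1) := by
  subst hF
  simp only [mem_sphere_zero_iff_norm, Prod.norm_def, Real.norm_eq_abs, max_abs_eq_one_iff]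
  constructor
  · rintro ⟨hIcc, σ, hσ, hx⟩
    have habs : ∀ v, |x v| ≤ 1 := fun v => abs_le.2 ⟨(hIcc v).1, (hIcc v).2⟩
    have hbd : ∀ v, v ∉ σ → |x v| = 1 := by
      intro v hv
      rcases not_and_or.1 ((hx v).not.2 hv) with h | h
      · rw [not_not.1 h]; simp
      · rw [not_not.1 h]; simp
    rw [mem_F_iff] at hσ
    refine ⟨⟨habs 0, habs 2, ?_⟩, ⟨habs 1, habs 3, ?_⟩⟩
    · by_cases h0 : (0 : Fin 4) ∈ σ
      · exact Or.inr (hbd 2 fun h2 => hσ.1 ⟨h0, h2⟩)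
      · exact Or.inl (hbd 0 h0)
    · by_cases h1 : (1 : Fin 4) ∈ σ
      · exact Or.inr (hbd 3 fun h3 => hσ.2 ⟨h1, h3⟩)
      · exact Or.inl (hbd 1 h1)
  · rintro ⟨⟨h0le, h2le, h02⟩, ⟨h1le, h3le, h13⟩⟩
    have habs : ∀ v, |x v| ≤ 1 := fun v => by fin_cases v <;> assumption
    refine ⟨fun v => Set.mem_Icc.2 (abs_le.1 (habs v)),
      Finset.univ.filter (fun v => x v ≠ -1 ∧ x v ≠ 1), ?_, fun v => by
        simp [Finset.mem_filter]⟩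
    rw [mem_F_iff]
    have key : ∀ v, |x v| = 1 → ¬(v ∈ Finset.univ.filter (fun v => x v ≠ -1 ∧ x v ≠ 1)) := by
      intro v hv
      simp only [Finset.mem_filter, Finset.mem_univ, true_and, not_and_or, not_not, ne_eq]
      rcases abs_eq (by norm_num : (0:ℝ) ≤ 1) |>.1 hv with h | h
      · exact Or.inr h
      · exact Or.inl h
    constructor
    · rcases h02 with h | h
      · exact fun hc => key 0 h hc.1
      · exact fun hc => key 2 h hc.2
    · rcases h13 with h | h
      · exact fun hc => key 1 h hc.1
      · exact fun hc => key 3 h hc.2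

/-- The homeomorphism `ℝ⁴ ≃ₜ ℝ² × ℝ²` sending `x` to `((x 0, x 2), (x 1, x 3))`. -/
def splitHomeo : (Fin 4 → ℝ) ≃ₜ (ℝ × ℝ) × (ℝ × ℝ) where
  toFun x := ((x 0, x 2), (x 1, x 3))
  invFun p := ![p.1.1, p.2.1, p.1.2, p.2.2]
  left_inv x := by funext v; fin_cases v <;> simp
  right_inv p := rfl
  continuous_toFun := by fun_prop
  continuous_invFun := by
    refine continuous_pi fun i => ?_
    fin_cases i <;> simp <;> fun_prop

/-- Let `T` be the 4-cycle on vertices `{0,1,2,3}`, with maximal simplices the edges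
`{0,1}, {1,2}, {2,3}, {3,0}`. Then the Davis complex `Dav(T) ⊆ ℝ⁴` is homeomorphic to the
2-dimensional torus `S¹ × S¹`. -/
theorem davis_square_torus (F : Set (Finset (Fin 4)))
    (hF : F = {∅, {0}, {1}, {2}, {3}, ({0, 1} : Finset (Fin 4)), {1, 2}, {2, 3}, {3, 0}}) :
    Nonempty (↥(DavSet F) ≃ₜ
      ↥(Metric.sphere (0 : EuclideanSpace ℝ (Fin 2)) 1) ×
        ↥(Metric.sphere (0 : EuclideanSpace ℝ (Fin 2)) 1)) := by
  set S : Set (ℝ × ℝ) := Metric.sphere (0 : ℝ × ℝ) 1 with hS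
  have hpre : DavSet F = splitHomeo ⁻¹' (S ×ˢ S) := by
    ext x
    rw [mem_davset_iff F hF x]
    rfl
  have himg : splitHomeo '' DavSet F = S ×ˢ S := by
    rw [hpre, Set.image_preimage_eq _ splitHomeo.surjective]
  have L : (ℝ × ℝ) ≃L[ℝ] EuclideanSpace ℝ (Fin 2) :=
    ((EuclideanSpace.equiv (Fin 2) ℝ).trans (ContinuousLinearEquiv.finTwoArrow ℝ ℝ)).symm
  have h : ↥S ≃ₜ ↥(Metric.sphere (0 : EuclideanSpace ℝ (Fin 2)) 1) := sphereHomeoOfCLE L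
  exact ⟨((splitHomeo.image (DavSet F)).trans (Homeomorph.setCongr himg)).trans
    ((Homeomorph.Set.prod S S).trans (h.prodCongr h))⟩
end
end

section
/- Let K be a finite geometric simplicial complex in some ℝ^N whose underlying space (the union of the convex hulls of its faces) is homeomorphic to the n-dimensional sphere S^n, and let T be the associated abstract simplicial complex on the vertex set V of K (whose simplices are the vertex sets of the faces of K). Then Dav(T) ⊆ ℝ^V is a closed connected topological (n+1)-manifold: it is compact, path-connected, and every point of Dav(T) has an open neighbourhood (in Dav(T)) homeomorphic to ℝ^(n+1). -/
open scoped Classical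

noncomputable section

section Davis
variable {V : Type*} [Fintype V]

def suppF (x : V → ℝ) : Finset V := Finset.univ.filter fun v => x v ≠ 0
def freeF (x : V → ℝ) : Finset V := Finset.univ.filter fun v => x v ≠ -1 ∧ x v ≠ 1

lemma mem_suppF {x : V → ℝ} {v : V} : v ∈ suppF x ↔ x v ≠ 0 := by simp [suppF]
lemma mem_freeF {x : V → ℝ} {v : V} : v ∈ freeF x ↔ (x v ≠ -1 ∧ x v ≠ 1) := by simp [freeF]

lemma mem_davSet_iff {F : Set (Finset V)} {x : V → ℝ} :
    x ∈ DavSet F ↔ (∀ v, x v ∈ Set.Icc (-1 : ℝ) 1) ∧ freeF x ∈ F := by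
  constructor
  · rintro ⟨h1, σ, hσ, h2⟩
    refine ⟨h1, ?_⟩
    have : freeF x = σ := Finset.ext fun v => by simp [mem_freeF, h2 v]
    rwa [this]
  · rintro ⟨h1, h2⟩
    exact ⟨h1, freeF x, h2, fun v => (mem_freeF).symm⟩

variable (F : Set (Finset V))

def ccone : Set (V → ℝ) := {y | (∀ v, y v ∈ Set.Icc (0:ℝ) 1) ∧ suppF y ∈ F}
def ocone : Set (V → ℝ) := {y | (∀ v, y v ∈ Set.Ico (0:ℝ) 1) ∧ suppF y ∈ F}
def realiz : Set (V → ℝ) := {y | (∀ v, 0 ≤ y v) ∧ suppF y ∈ F ∧ ∑ v, y v = 1}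

variable {F}
variable (hdown : ∀ σ ∈ F, ∀ τ : Finset V, τ ⊆ σ → τ ∈ F)

include hdown in
lemma isCompact_davSet : IsCompact (DavSet F) := by
  have : DavSet F = ⋃ σ ∈ F, Set.pi Set.univ
      (fun v => if v ∈ σ then Set.Icc (-1:ℝ) 1 else {-1, 1}) := by
    ext x
    simp only [Set.mem_iUnion, Set.mem_pi, Set.mem_univ, forall_true_left, mem_davSet_iff]
    constructor
    · rintro ⟨h1, h2⟩
      refine ⟨freeF x, h2, fun v => ?_⟩
      by_cases hv : v ∈ freeF x
      · simp [hv, h1 v]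
      · rw [if_neg hv]
        rw [mem_freeF] at hv
        push_neg at hv
        by_cases h : x v = -1
        · simp [h]
        · simp [hv h]
    · rintro ⟨σ, hσ, h⟩
      have hIcc : ∀ v, x v ∈ Set.Icc (-1:ℝ) 1 := by
        intro v
        have := h v
        split_ifs at this with hv
        · exact this
        · simp only [Set.mem_insert_iff, Set.mem_singleton_iff] at this
          rcases this with h' | h' <;> simp [h']
      refine ⟨hIcc, hdown σ hσ _ fun v hv => ?_⟩
      rw [mem_freeF] at hv
      by_contra hvσ
      have := h v
      rw [if_neg hvσ] at this
      simp only [Set.mem_insert_iff, Set.mem_singleton_iff] at this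
      rcases this with h' | h' <;> simp [h'] at hv
  rw [this]
  exact Set.Finite.isCompact_biUnion (Set.toFinite F) fun σ _ =>
    isCompact_univ_pi fun v => by
      split_ifs
      · exact isCompact_Icc
      · exact (Set.toFinite ({-1,1} : Set ℝ)).isCompact

include hdown in
lemma isCompact_ccone : IsCompact (ccone F) := by
  have : ccone F = ⋃ σ ∈ F, Set.pi Set.univ
      (fun v => if v ∈ σ then Set.Icc (0:ℝ) 1 else {0}) := by
    ext y
    simp only [Set.mem_iUnion, Set.mem_pi, Set.mem_univ, forall_true_left, ccone,
      Set.mem_setOf_eq]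
    constructor
    · rintro ⟨h1, h2⟩
      refine ⟨suppF y, h2, fun v => ?_⟩
      by_cases hv : v ∈ suppF y
      · simp [hv, h1 v]
      · rw [if_neg hv]
        rw [mem_suppF, not_not] at hv
        simp [hv]
    · rintro ⟨σ, hσ, h⟩
      have h0 : ∀ v, v ∉ σ → y v = 0 := by
        intro v hv
        have := h v
        rwa [if_neg hv, Set.mem_singleton_iff] at this
      have hIcc : ∀ v, y v ∈ Set.Icc (0:ℝ) 1 := by
        intro v
        by_cases hv : v ∈ σ
        · have := h v; rwa [if_pos hv] at this
        · simp [h0 v hv]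
      refine ⟨hIcc, hdown σ hσ _ fun v hv => ?_⟩
      rw [mem_suppF] at hv
      by_contra hvσ
      exact hv (h0 v hvσ)
  rw [this]
  exact Set.Finite.isCompact_biUnion (Set.toFinite F) fun σ _ =>
    isCompact_univ_pi fun v => by
      split_ifs
      · exact isCompact_Icc
      · exact isCompact_singleton

include hdown in
lemma isCompact_realiz : IsCompact (realiz F) := by
  have : realiz F = ccone F ∩ {y | ∑ v, y v = 1} := by
    ext y
    simp only [realiz, ccone, Set.mem_setOf_eq, Set.mem_inter_iff]
    constructor
    · rintro ⟨h1, h2, h3⟩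
      refine ⟨⟨fun v => ⟨h1 v, ?_⟩, h2⟩, h3⟩
      calc y v ≤ ∑ w, y w := Finset.single_le_sum (fun w _ => h1 w) (Finset.mem_univ v)
        _ = 1 := h3
    · rintro ⟨⟨h1, h2⟩, h3⟩
      exact ⟨fun v => (h1 v).1, h2, h3⟩
  rw [this]
  exact (isCompact_ccone hdown).inter_right
    (isClosed_eq (continuous_finset_sum _ fun i _ => continuous_apply i) continuous_const)

lemma joinedIn_update (hC : IsComplex F) (ε : V → ℝ) (hε : ∀ v, ε v = 1 ∨ ε v = -1)
    (a : V) (c : ℝ) (hc : c = 1 ∨ c = -1) :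
    JoinedIn (DavSet F) ε (Function.update ε a c) := by
  obtain ⟨hF0, hFs, hFd⟩ := hC
  refine ⟨⟨⟨fun t => fun v => if v = a then (1 - t.1) * ε a + t.1 * c else ε v, ?_⟩, ?_, ?_⟩, ?_⟩
  · refine continuous_pi fun v => ?_
    by_cases hv : v = a
    · simp only [if_pos hv]; fun_prop
    · simp only [if_neg hv]; exact continuous_const
  · ext v
    by_cases hv : v = a <;> simp [hv]
  · ext v
    by_cases hv : v = a <;> simp [hv, Function.update]
  · intro t
    rw [mem_davSet_iff]
    simp only [Path.coe_mk_mk, ContinuousMap.coe_mk]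
    constructor
    · intro v
      by_cases hv : v = a
      · simp only [if_pos hv]
        have h1 : ε a ∈ Set.Icc (-1:ℝ) 1 := by rcases hε a with h | h <;> simp [h]
        have h2 : c ∈ Set.Icc (-1:ℝ) 1 := by rcases hc with h | h <;> simp [h]
        have := convex_Icc (-1:ℝ) 1 h1 h2 (by linarith [t.2.2] : (0:ℝ) ≤ 1 - t.1) t.2.1
          (by ring)
        simpa [smul_eq_mul] using this
      · simp only [if_neg hv]
        rcases hε v with h | h <;> simp [h]
    · refine hFd _ (hFs a) _ fun v hv => ?_
      simp only [mem_freeF] at hv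
      simp only [Finset.mem_singleton]
      by_contra hva
      rw [if_neg hva] at hv
      rcases hε v with h | h <;> simp [h] at hv

lemma joinedIn_vertices (hC : IsComplex F) (D : Finset V) (ε ε' : V → ℝ)
    (hε : ∀ v, ε v = 1 ∨ ε v = -1) (hε' : ∀ v, ε' v = 1 ∨ ε' v = -1)
    (hD : ∀ v, v ∉ D → ε v = ε' v) : JoinedIn (DavSet F) ε ε' := by
  induction D using Finset.induction generalizing ε with
  | empty =>
    have : ε = ε' := funext fun v => hD v (Finset.notMem_empty v)
    rw [this]
    have hmem : ε' ∈ DavSet F := by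
      rw [mem_davSet_iff]
      constructor
      · intro v; rcases hε' v with h | h <;> simp [h]
      · have : freeF ε' = ∅ := by
          ext v
          simp only [mem_freeF, Finset.notMem_empty, iff_false, not_and_or, not_not]
          rcases hε' v with h | h <;> simp [h]
        rw [this]; exact hC.1
    exact JoinedIn.refl hmem
  | @insert a s ha IH =>
    have step := joinedIn_update hC ε hε a (ε' a) (hε' a)
    refine step.trans (IH (Function.update ε a (ε' a)) ?_ ?_)
    · intro v
      by_cases hv : v = a
      · subst hv; simp [hε' v]
      · simp [Function.update, hv, hε v]
    · intro v hv
      by_cases hva : v = a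
      · subst hva; simp
      · have : v ∉ insert a s := by simp [hva, hv]
        simp [Function.update, hva, hD v this]

lemma isPathConnected_davSet (hC : IsComplex F) : IsPathConnected (DavSet F) := by
  have hone : (fun _ : V => (1:ℝ)) ∈ DavSet F := by
    rw [mem_davSet_iff]
    refine ⟨fun v => by norm_num, ?_⟩
    have : freeF (fun _ : V => (1:ℝ)) = ∅ := by
      ext v; simp [mem_freeF]
    rw [this]; exact hC.1
  refine ⟨fun _ => 1, hone, fun {y} hy => ?_⟩
  set εy : V → ℝ := fun v => if y v = -1 then -1 else 1 with hεy
  have hεy1 : ∀ v, εy v = 1 ∨ εy v = -1 := by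
    intro v; by_cases h : y v = -1 <;> simp [εy, h]
  have j1 : JoinedIn (DavSet F) (fun _ => 1) εy :=
    joinedIn_vertices hC Finset.univ _ _ (fun _ => Or.inl rfl) hεy1
      (fun v hv => absurd (Finset.mem_univ v) hv)
  have j2 : JoinedIn (DavSet F) y εy := by
    rw [mem_davSet_iff] at hy
    obtain ⟨hIcc, hfree⟩ := hy
    refine ⟨⟨⟨fun t => fun v => (1 - t.1) * y v + t.1 * εy v, by fun_prop⟩, ?_, ?_⟩, ?_⟩
    · ext v; simp
    · ext v; simp
    · intro t
      rw [mem_davSet_iff]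
      simp only [Path.coe_mk_mk, ContinuousMap.coe_mk]
      constructor
      · intro v
        have h2 : εy v ∈ Set.Icc (-1:ℝ) 1 := by rcases hεy1 v with h | h <;> simp [h]
        have := convex_Icc (-1:ℝ) 1 (hIcc v) h2 (by linarith [t.2.2] : (0:ℝ) ≤ 1 - t.1)
          t.2.1 (by ring)
        simpa [smul_eq_mul] using this
      · refine hC.2.2 _ hfree _ fun v hv => ?_
        simp only [mem_freeF] at hv
        rw [mem_freeF]
        by_contra hvf
        rw [not_and_or, not_not, not_not] at hvf
        rcases hvf with h | h
        · have heps : εy v = -1 := by simp [εy, h]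
          rw [h, heps] at hv
          exact hv.1 (by ring)
        · have hyne : y v ≠ -1 := by rw [h]; norm_num
          have heps : εy v = 1 := by simp [εy, hyne]
          rw [h, heps] at hv
          exact hv.2 (by ring)
  exact j1.trans j2.symm

def nestHomeo {X : Type*} [TopologicalSpace X] (S T : Set X) (hTS : T ⊆ S) :
    {x : ↥S // x.1 ∈ T} ≃ₜ ↥T where
  toFun x := ⟨x.1.1, x.2⟩
  invFun x := ⟨⟨x.1, hTS x.2⟩, x.2⟩
  left_inv x := Subtype.ext (Subtype.ext rfl)
  right_inv x := rfl
  continuous_toFun :=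
    Continuous.subtype_mk (continuous_subtype_val.comp continuous_subtype_val) _
  continuous_invFun :=
    Continuous.subtype_mk (Continuous.subtype_mk continuous_subtype_val _) _

theorem ocone_homeo (hdown : ∀ σ ∈ F, ∀ τ : Finset V, τ ⊆ σ → τ ∈ F) (hF0 : ∅ ∈ F) {n : ℕ}
    (h : ↥(realiz F) ≃ₜ ↥(Metric.sphere (0 : EuclideanSpace ℝ (Fin (n+1))) 1)) :
    Nonempty (↥(ocone F) ≃ₜ EuclideanSpace ℝ (Fin (n+1))) := by
  set E := EuclideanSpace ℝ (Fin (n+1)) with hEdef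
  have hsumpos : ∀ y : V → ℝ, y ∈ ccone F → y ≠ 0 → 0 < ∑ v, y v := by
    intro y hy hy0
    obtain ⟨v, hv⟩ := Function.ne_iff.mp hy0
    refine Finset.sum_pos' (fun w _ => (hy.1 w).1) ⟨v, Finset.mem_univ v, ?_⟩
    exact lt_of_le_of_ne (hy.1 v).1 (Ne.symm hv)
  have hsupp_smul : ∀ (c : ℝ), c ≠ 0 → ∀ y : V → ℝ, suppF (c • y) = suppF y := by
    intro c hc y
    ext v
    simp [mem_suppF, Pi.smul_apply, smul_eq_mul, hc]
  have hnorm : ∀ y : V → ℝ, y ∈ ccone F → y ≠ 0 → (∑ v, y v)⁻¹ • y ∈ realiz F := by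
    intro y hy hy0
    have hs := hsumpos y hy hy0
    refine ⟨fun v => mul_nonneg (inv_nonneg.mpr hs.le) (hy.1 v).1, ?_, ?_⟩
    · rw [hsupp_smul _ (inv_ne_zero hs.ne') y]; exact hy.2
    · simp only [Pi.smul_apply, smul_eq_mul, ← Finset.mul_sum]
      exact inv_mul_cancel₀ hs.ne'
  set G : ↥(ccone F) → E := fun y =>
    if hy : y.1 = 0 then 0
    else ‖y.1‖ • ((h ⟨(∑ v, y.1 v)⁻¹ • y.1, hnorm y.1 y.2 hy⟩ :
      ↥(Metric.sphere (0:E) 1)) : E)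
    with hGdef
  have norm_G : ∀ y, ‖G y‖ = ‖y.1‖ := by
    intro y
    simp only [hGdef]
    by_cases hy : y.1 = 0
    · simp [hy]
    · rw [dif_neg hy, norm_smul]
      have hmem := (h ⟨(∑ v, y.1 v)⁻¹ • y.1, hnorm y.1 y.2 hy⟩).2
      rw [mem_sphere_zero_iff_norm.mp hmem]
      simp
  have hGcont : Continuous G := by
    rw [continuous_iff_continuousAt]
    intro y0
    by_cases hy0 : y0.1 = 0
    · have hnt : Filter.Tendsto (fun y : ↥(ccone F) => ‖y.1‖) (nhds y0) (nhds ‖y0.1‖) :=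
        ((continuous_norm.comp continuous_subtype_val).tendsto y0 : _)
      rw [show ‖y0.1‖ = 0 by rw [hy0]; simp] at hnt
      have htend : Filter.Tendsto G (nhds y0) (nhds 0) :=
        squeeze_zero_norm (fun y => le_of_eq (norm_G y)) hnt
      have hGy0 : G y0 = 0 := by simp only [hGdef]; exact dif_pos hy0
      rw [ContinuousAt, hGy0]
      exact htend
    · have hopen : IsOpen {y : ↥(ccone F) | y.1 ≠ 0} :=
        isOpen_compl_singleton.preimage continuous_subtype_val
      have hco : ContinuousOn G {y : ↥(ccone F) | y.1 ≠ 0} := by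
        rw [continuousOn_iff_continuous_restrict]
        have hval : Continuous fun y : ↥{y : ↥(ccone F) | y.1 ≠ 0} => y.1.1 :=
          continuous_subtype_val.comp continuous_subtype_val
        have hsum : Continuous fun y : ↥{y : ↥(ccone F) | y.1 ≠ 0} => ∑ v, y.1.1 v :=
          (continuous_finset_sum _ fun i _ => continuous_apply i).comp hval
        have hinv : Continuous fun y : ↥{y : ↥(ccone F) | y.1 ≠ 0} => (∑ v, y.1.1 v)⁻¹ :=
          hsum.inv₀ fun y => (hsumpos y.1.1 y.1.2 y.2).ne'
        have hnmap : Continuous fun y : ↥{y : ↥(ccone F) | y.1 ≠ 0} =>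
            (⟨(∑ v, y.1.1 v)⁻¹ • y.1.1, hnorm y.1.1 y.1.2 y.2⟩ : ↥(realiz F)) :=
          Continuous.subtype_mk (hinv.smul hval) _
        have hfull : Continuous fun y : ↥{y : ↥(ccone F) | y.1 ≠ 0} =>
            ‖y.1.1‖ • ((h ⟨(∑ v, y.1.1 v)⁻¹ • y.1.1, hnorm y.1.1 y.1.2 y.2⟩ :
              ↥(Metric.sphere (0:E) 1)) : E) :=
          (hval.norm).smul (continuous_subtype_val.comp (h.continuous.comp hnmap))
        convert hfull using 1
        funext y
        show G y.1 = _
        simp only [hGdef]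
        exact dif_neg y.2
      exact hco.continuousAt (hopen.mem_nhds hy0)
  have hGball : ∀ y, G y ∈ Metric.closedBall (0:E) 1 := by
    intro y
    rw [Metric.mem_closedBall, dist_zero_right, norm_G]
    rw [pi_norm_le_iff_of_nonneg zero_le_one]
    intro v
    rw [Real.norm_eq_abs, abs_of_nonneg (y.2.1 v).1]
    exact (y.2.1 v).2
  set G' : ↥(ccone F) → ↥(Metric.closedBall (0:E) 1) := fun y => ⟨G y, hGball y⟩ with hG'def
  have hzero_mem : (0 : V → ℝ) ∈ ccone F := by
    refine ⟨fun v => by norm_num, ?_⟩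
    have hsz : suppF (0 : V → ℝ) = ∅ := by ext v; simp [mem_suppF]
    rw [hsz]; exact hF0
  have hGinj : Function.Injective G' := by
    intro y z hyz
    have hyz' : G y = G z := congrArg Subtype.val hyz
    by_cases hy : y.1 = 0 <;> by_cases hz : z.1 = 0
    · exact Subtype.ext (hy.trans hz.symm)
    · exfalso
      have h1 : ‖G y‖ = 0 := by rw [norm_G, hy]; simp
      have h2 : ‖G z‖ ≠ 0 := by rw [norm_G]; exact norm_ne_zero_iff.mpr hz
      exact h2 (by rw [← hyz', h1])
    · exfalso
      have h1 : ‖G z‖ = 0 := by rw [norm_G, hz]; simp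
      have h2 : ‖G y‖ ≠ 0 := by rw [norm_G]; exact norm_ne_zero_iff.mpr hy
      exact h2 (by rw [hyz', h1])
    · have hnn : ‖y.1‖ = ‖z.1‖ := by rw [← norm_G, ← norm_G, hyz']
      have hyn0 : ‖y.1‖ ≠ 0 := norm_ne_zero_iff.mpr hy
      have hzn0 : ‖z.1‖ ≠ 0 := norm_ne_zero_iff.mpr hz
      simp only [hGdef] at hyz'
      simp only [dif_neg hy, dif_neg hz] at hyz'
      rw [← hnn] at hyz'
      have hsph : ((h ⟨(∑ v, y.1 v)⁻¹ • y.1, hnorm y.1 y.2 hy⟩ :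
            ↥(Metric.sphere (0:E) 1)) : E) =
          ((h ⟨(∑ v, z.1 v)⁻¹ • z.1, hnorm z.1 z.2 hz⟩ : ↥(Metric.sphere (0:E) 1)) : E) :=
        smul_right_injective E hyn0 hyz'
      have heq : (⟨(∑ v, y.1 v)⁻¹ • y.1, hnorm y.1 y.2 hy⟩ : ↥(realiz F)) =
          ⟨(∑ v, z.1 v)⁻¹ • z.1, hnorm z.1 z.2 hz⟩ :=
        h.injective (Subtype.ext hsph)
      have heq' : (∑ v, y.1 v)⁻¹ • y.1 = (∑ v, z.1 v)⁻¹ • z.1 := congrArg Subtype.val heq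
      have hsy := hsumpos y.1 y.2 hy
      have hsz := hsumpos z.1 z.2 hz
      have hy1 : y.1 = ((∑ v, y.1 v) * (∑ v, z.1 v)⁻¹) • z.1 := by
        rw [mul_smul, ← heq', smul_smul, mul_inv_cancel₀ hsy.ne', one_smul]
      have hcpos : 0 < (∑ v, y.1 v) * (∑ v, z.1 v)⁻¹ := mul_pos hsy (inv_pos.mpr hsz)
      have hnormeq : ‖y.1‖ = ((∑ v, y.1 v) * (∑ v, z.1 v)⁻¹) * ‖z.1‖ := by
        conv_lhs => rw [hy1]
        rw [norm_smul, Real.norm_eq_abs, abs_of_pos hcpos]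
      have hc1 : (∑ v, y.1 v) * (∑ v, z.1 v)⁻¹ = 1 := by
        have : ((∑ v, y.1 v) * (∑ v, z.1 v)⁻¹) * ‖z.1‖ = 1 * ‖z.1‖ := by
          rw [one_mul, ← hnormeq, hnn]
        exact mul_right_cancel₀ hzn0 this
      rw [hc1, one_smul] at hy1
      exact Subtype.ext hy1
  have hGsurj : Function.Surjective G' := by
    intro w
    by_cases hw : (w : E) = 0
    · refine ⟨⟨0, hzero_mem⟩, Subtype.ext ?_⟩
      show G _ = (w : E)
      simp only [hGdef]
      rw [dif_pos trivial, hw]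
    · have hwn : ‖(w : E)‖ ≠ 0 := norm_ne_zero_iff.mpr hw
      have hwpos : 0 < ‖(w : E)‖ := norm_pos_iff.mpr hw
      have hwle : ‖(w : E)‖ ≤ 1 := by
        have hw2 := w.2
        rwa [Metric.mem_closedBall, dist_zero_right] at hw2
      have husph : ‖(w : E)‖⁻¹ • (w : E) ∈ Metric.sphere (0:E) 1 := by
        rw [mem_sphere_zero_iff_norm, norm_smul, Real.norm_eq_abs,
          abs_of_pos (inv_pos.mpr hwpos), inv_mul_cancel₀ hwn]
      set z : ↥(realiz F) := h.symm ⟨‖(w : E)‖⁻¹ • (w : E), husph⟩ with hzdef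
      obtain ⟨hznn, hzsupp, hzsum⟩ := z.2
      have hz0 : z.1 ≠ 0 := by
        intro hcon
        rw [hcon] at hzsum
        simp at hzsum
      have hznpos : 0 < ‖z.1‖ := norm_pos_iff.mpr hz0
      set c : ℝ := ‖(w : E)‖ * ‖z.1‖⁻¹ with hcdef
      have hcpos : 0 < c := mul_pos hwpos (inv_pos.mpr hznpos)
      have hynorm : ‖c • z.1‖ = ‖(w : E)‖ := by
        rw [norm_smul, Real.norm_eq_abs, abs_of_pos hcpos, hcdef]
        field_simp
      have hycc : c • z.1 ∈ ccone F := by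
        constructor
        · intro v
          constructor
          · exact mul_nonneg hcpos.le (hznn v)
          · calc (c • z.1) v ≤ |(c • z.1) v| := le_abs_self _
              _ = ‖(c • z.1) v‖ := (Real.norm_eq_abs _).symm
              _ ≤ ‖c • z.1‖ := norm_le_pi_norm _ v
              _ = ‖(w : E)‖ := hynorm
              _ ≤ 1 := hwle
        · rw [hsupp_smul c hcpos.ne' z.1]; exact hzsupp
      have hy0 : c • z.1 ≠ 0 := by
        intro hcon
        rw [hcon, norm_zero] at hynorm
        exact hwn hynorm.symm
      refine ⟨⟨c • z.1, hycc⟩, Subtype.ext ?_⟩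
      show G ⟨c • z.1, hycc⟩ = (w : E)
      simp only [hGdef]
      rw [dif_neg (show (⟨c • z.1, hycc⟩ : ↥(ccone F)).1 ≠ 0 from hy0)]
      have hsum : ∑ v, (c • z.1) v = c := by
        simp only [Pi.smul_apply, smul_eq_mul, ← Finset.mul_sum, hzsum, mul_one]
      have harg : (⟨(∑ v, (⟨c • z.1, hycc⟩ : ↥(ccone F)).1 v)⁻¹ •
          (⟨c • z.1, hycc⟩ : ↥(ccone F)).1,
          hnorm _ hycc hy0⟩ : ↥(realiz F)) = z := by
        refine Subtype.ext ?_
        show (∑ v, (c • z.1) v)⁻¹ • (c • z.1) = z.1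
        rw [hsum, inv_smul_smul₀ hcpos.ne']
      rw [harg]
      have happ : h z = ⟨‖(w : E)‖⁻¹ • (w : E), husph⟩ := by
        rw [hzdef]; exact h.apply_symm_apply _
      rw [happ]
      show ‖c • z.1‖ • (‖(w : E)‖⁻¹ • (w : E)) = (w : E)
      rw [hynorm, smul_smul, mul_inv_cancel₀ hwn, one_smul]
  haveI : CompactSpace ↥(ccone F) := isCompact_iff_compactSpace.mp (isCompact_ccone hdown)
  have hbij : Function.Bijective G' := ⟨hGinj, hGsurj⟩
  have hG'cont : Continuous ⇑(Equiv.ofBijective G' hbij) := Continuous.subtype_mk hGcont _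
  set e : ↥(ccone F) ≃ₜ ↥(Metric.closedBall (0:E) 1) := hG'cont.homeoOfEquivCompactToT2
    with hedef
  have hoc : ∀ x : ↥(ccone F), x.1 ∈ ocone F ↔ ‖x.1‖ < 1 := by
    intro x
    rw [pi_norm_lt_iff zero_lt_one]
    constructor
    · intro hx v
      rw [Real.norm_eq_abs, abs_of_nonneg (x.2.1 v).1]
      exact (hx.1 v).2
    · intro hx
      refine ⟨fun v => ⟨(x.2.1 v).1, ?_⟩, x.2.2⟩
      have hxv := hx v
      rwa [Real.norm_eq_abs, abs_of_nonneg (x.2.1 v).1] at hxv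
  have hiff : ∀ x : ↥(ccone F), x.1 ∈ ocone F ↔ ((e x : ↥(Metric.closedBall (0:E) 1)) : E) ∈
      Metric.ball (0:E) 1 := by
    intro x
    rw [Metric.mem_ball, dist_zero_right]
    have hex : ((e x : ↥(Metric.closedBall (0:E) 1)) : E) = G x := rfl
    rw [hex, norm_G]
    exact hoc x
  have hocc : ocone F ⊆ ccone F := fun y hy => ⟨fun v => ⟨(hy.1 v).1, (hy.1 v).2.le⟩, hy.2⟩
  exact ⟨(((nestHomeo (ccone F) (ocone F) hocc).symm.trans (e.subtype hiff)).trans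
    ((nestHomeo (Metric.closedBall (0:E) 1) (Metric.ball (0:E) 1)
      Metric.ball_subset_closedBall).trans Homeomorph.unitBall.symm))⟩

theorem chart_homeo (hC : IsComplex F) (p : ↥(DavSet F)) :
    ∃ U : Set ↥(DavSet F), IsOpen U ∧ p ∈ U ∧ Nonempty (↥U ≃ₜ ↥(ocone F)) := by
  set ε : V → ℝ := fun v => if p.1 v = -1 then -1 else 1 with hεdef
  have hε : ∀ v, ε v = 1 ∨ ε v = -1 := fun v => by
    by_cases h : p.1 v = -1 <;> simp [ε, h]
  have hsq : ∀ v, ε v * ε v = 1 := fun v => by rcases hε v with h | h <;> rw [h] <;> ring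
  refine ⟨{z : ↥(DavSet F) | ∀ v, z.1 v ≠ -ε v}, ?_, ?_, ?_⟩
  · have : {z : ↥(DavSet F) | ∀ v, z.1 v ≠ -ε v} =
        Subtype.val ⁻¹' (⋂ v, {x : V → ℝ | x v ≠ -ε v}) := by
      ext z; simp [Set.mem_iInter]
    rw [this]
    refine (isOpen_iInter_of_finite fun v => ?_).preimage continuous_subtype_val
    exact (isOpen_compl_singleton).preimage (continuous_apply v)
  · intro v
    show p.1 v ≠ -ε v
    by_cases h : p.1 v = -1
    · have hev : ε v = -1 := by rw [hεdef]; simp [h]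
      rw [hev, h]; norm_num
    · have hev : ε v = 1 := by rw [hεdef]; simp [h]
      rw [hev]; exact h
  · -- homeomorphism to the open cone
    -- helper facts
    have hfor : ∀ z : ↥(DavSet F), (∀ v, z.1 v ≠ -ε v) →
        (fun v => (1 - ε v * z.1 v) / 2) ∈ ocone F := by
      intro z hz
      obtain ⟨hIcc, hfree⟩ := mem_davSet_iff.mp z.2
      constructor
      · intro v
        show (1 - ε v * z.1 v) / 2 ∈ Set.Ico 0 1
        have hIv := hIcc v
        have hne := hz v
        rcases hε v with h | h <;> rw [h] at hne ⊢
        · have hlt : -1 < z.1 v := lt_of_le_of_ne hIv.1 (Ne.symm (by simpa using hne))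
          constructor
          · have := hIv.2; simp only [one_mul]; linarith
          · simp only [one_mul]; linarith
        · have hne' : z.1 v ≠ 1 := by intro hh; exact hne (by rw [hh]; ring)
          have hlt : z.1 v < 1 := lt_of_le_of_ne hIv.2 hne'
          constructor
          · have := hIv.1; nlinarith
          · nlinarith
      · have hss : suppF (fun v => (1 - ε v * z.1 v) / 2) = freeF z.1 := by
          ext v
          simp only [mem_suppF, mem_freeF]
          have hne := hz v
          have hIv := hIcc v
          rcases hε v with h | h <;> rw [h] at hne <;> rw [h]
          · constructor
            · intro hs
              refine ⟨by simpa using hne, fun hcon => hs (by rw [hcon]; ring)⟩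
            · rintro ⟨h1, h2⟩ hcon
              apply h2
              have : 1 - 1 * z.1 v = 0 := by linarith [hcon,
                (div_eq_zero_iff.mp hcon).resolve_right (by norm_num)]
              linarith
          · constructor
            · intro hs
              refine ⟨fun hcon => hs (by rw [hcon]; ring), fun hcon => hne (by rw [hcon]; ring)⟩
            · rintro ⟨h1, h2⟩ hcon
              apply h1
              have : 1 - (-1) * z.1 v = 0 :=
                (div_eq_zero_iff.mp hcon).resolve_right (by norm_num)
              linarith
        rw [hss]; exact hfree
    have hback : ∀ y : ↥(ocone F),
        (fun v => ε v * (1 - 2 * y.1 v)) ∈ DavSet F ∧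
        (∀ v, ε v * (1 - 2 * y.1 v) ≠ -ε v) := by
      intro y
      obtain ⟨hIco, hsupp⟩ := y.2
      have habs : ∀ v, -1 < 1 - 2 * y.1 v ∧ 1 - 2 * y.1 v ≤ 1 := by
        intro v
        have := hIco v
        constructor <;> [linarith [this.2]; linarith [this.1]]
      have hfr : freeF (fun v => ε v * (1 - 2 * y.1 v)) = suppF y.1 := by
        ext v
        rw [mem_freeF, mem_suppF]
        have h1 := (habs v).1
        have h2 := (habs v).2
        rcases hε v with h | h <;> rw [h] <;> constructor
        · rintro ⟨ha, hb⟩ hcon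
          apply hb; rw [hcon]; ring
        · intro hy
          constructor
          · intro hcon; rw [one_mul] at hcon; linarith [hcon ▸ h1]
          · intro hcon; rw [one_mul] at hcon; apply hy; linarith
        · rintro ⟨ha, hb⟩ hcon
          apply ha; rw [hcon]; ring
        · intro hy
          constructor
          · intro hcon
            have : 1 - 2 * y.1 v = 1 := by linarith [hcon]
            apply hy; linarith
          · intro hcon
            have : 1 - 2 * y.1 v = -1 := by linarith [hcon]
            linarith
      constructor
      · rw [mem_davSet_iff]
        constructor
        · intro v
          have h1 := (habs v).1
          have h2 := (habs v).2
          rcases hε v with h | h <;> rw [h] <;> constructor <;> simp <;> linarith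
        · rw [hfr]; exact hsupp
      · intro v
        have h1 := (habs v).1
        rcases hε v with h | h <;> rw [h] <;> intro hcon <;> nlinarith [hcon]
    refine ⟨⟨⟨fun z => ⟨fun v => (1 - ε v * z.1.1 v) / 2, hfor z.1 z.2⟩,
      fun y => ⟨⟨fun v => ε v * (1 - 2 * y.1 v), (hback y).1⟩, (hback y).2⟩, ?_, ?_⟩, ?_, ?_⟩⟩
    · intro z
      refine Subtype.ext (Subtype.ext (funext fun v => ?_))
      show ε v * (1 - 2 * ((1 - ε v * z.1.1 v) / 2)) = z.1.1 v
      rcases hε v with h | h <;> rw [h] <;> ring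
    · intro y
      refine Subtype.ext (funext fun v => ?_)
      show (1 - ε v * (ε v * (1 - 2 * y.1 v))) / 2 = y.1 v
      rcases hε v with h | h <;> rw [h] <;> ring
    · refine Continuous.subtype_mk (continuous_pi fun v => ?_) _
      have hcz : Continuous fun z : ↥{z : ↥(DavSet F) | ∀ v, z.1 v ≠ -ε v} => z.1.1 v :=
        (continuous_apply v).comp (continuous_subtype_val.comp continuous_subtype_val)
      exact (continuous_const.sub (continuous_const.mul hcz)).div_const 2
    · refine Continuous.subtype_mk (Continuous.subtype_mk (continuous_pi fun v => ?_) _) _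
      have hcy : Continuous fun y : ↥(ocone F) => y.1 v :=
        (continuous_apply v).comp continuous_subtype_val
      exact continuous_const.mul (continuous_const.sub (continuous_const.mul hcy))

end Davis

theorem realiz_homeo (N : ℕ) (K : Geometry.SimplicialComplex ℝ (EuclideanSpace ℝ (Fin N)))
    (hfin : K.faces.Finite) [Fintype ↥K.vertices] :
    Nonempty (↥(realiz (insert ∅ {σ : Finset ↥K.vertices |
      σ.map (Function.Embedding.subtype _) ∈ K.faces})) ≃ₜ ↥K.space) := by
  classical
  set A : Set (Finset ↥K.vertices) :=
    insert ∅ {σ | σ.map (Function.Embedding.subtype _) ∈ K.faces} with hAdef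
  set emb : ↥K.vertices ↪ EuclideanSpace ℝ (Fin N) := Function.Embedding.subtype _ with hembdef
  have hembv : ∀ v : ↥K.vertices, emb v = (v : EuclideanSpace ℝ (Fin N)) := fun v => rfl
  set φ : (↥K.vertices → ℝ) → EuclideanSpace ℝ (Fin N) :=
    fun y => ∑ v : ↥K.vertices, y v • (v : EuclideanSpace ℝ (Fin N)) with hφdef
  have hφcont : Continuous φ := continuous_finset_sum _ fun v _ =>
    (continuous_apply v).smul continuous_const
  have hAdown : ∀ σ ∈ A, ∀ τ : Finset ↥K.vertices, τ ⊆ σ → τ ∈ A := by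
    rintro σ (rfl | hσ) τ hτ
    · rw [Finset.subset_empty] at hτ
      subst hτ
      exact Set.mem_insert _ _
    · rcases eq_or_ne τ ∅ with rfl | hne
      · exact Set.mem_insert _ _
      · right
        refine K.down_closed hσ (Finset.map_subset_map.mpr hτ) ?_
        simpa [Finset.nonempty_iff_ne_empty] using hne
  -- uniqueness of barycentric coordinates on a face
  have uniq : ∀ s ∈ K.faces, ∀ w w' : EuclideanSpace ℝ (Fin N) → ℝ,
      ∑ e ∈ s, w e = 1 → ∑ e ∈ s, w' e = 1 →
      (∑ e ∈ s, w e • e) = (∑ e ∈ s, w' e • e) → ∀ e ∈ s, w e = w' e := by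
    intro s hs w w' hw hw' heq e he
    have hind := K.indep hs
    rw [affineIndependent_iff_eq_of_fintype_affineCombination_eq] at hind
    have h1 : ∑ i : ↥s, w ↑i = 1 := by rw [Finset.sum_coe_sort s w]; exact hw
    have h2 : ∑ i : ↥s, w' ↑i = 1 := by rw [Finset.sum_coe_sort s w']; exact hw'
    have hc1 : Finset.univ.affineCombination ℝ (fun i : ↥s => (i : EuclideanSpace ℝ (Fin N)))
        (fun i => w ↑i) = ∑ i : ↥s, w ↑i • (i : EuclideanSpace ℝ (Fin N)) :=
      Finset.affineCombination_eq_linear_combination _ _ _ h1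
    have hc2 : Finset.univ.affineCombination ℝ (fun i : ↥s => (i : EuclideanSpace ℝ (Fin N)))
        (fun i => w' ↑i) = ∑ i : ↥s, w' ↑i • (i : EuclideanSpace ℝ (Fin N)) :=
      Finset.affineCombination_eq_linear_combination _ _ _ h2
    have hsums1 : ∑ i : ↥s, w ↑i • (i : EuclideanSpace ℝ (Fin N)) = ∑ e ∈ s, w e • e :=
      Finset.sum_coe_sort s (fun e => w e • e)
    have hsums2 : ∑ i : ↥s, w' ↑i • (i : EuclideanSpace ℝ (Fin N)) = ∑ e ∈ s, w' e • e :=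
      Finset.sum_coe_sort s (fun e => w' e • e)
    have := hind (fun i => w ↑i) (fun i => w' ↑i) h1 h2
      (by rw [hc1, hc2, hsums1, hsums2]; exact heq)
    exact congrFun this ⟨e, he⟩
  -- basic sum manipulation facts
  have hsupp_sum : ∀ y : ↥K.vertices → ℝ, ∑ v ∈ suppF y, y v = ∑ v : ↥K.vertices, y v := by
    intro y
    refine Finset.sum_subset (Finset.subset_univ _) fun v _ hv => ?_
    rw [mem_suppF, not_not] at hv
    exact hv
  have hφ_supp : ∀ y : ↥K.vertices → ℝ,
      φ y = ∑ v ∈ suppF y, y v • (v : EuclideanSpace ℝ (Fin N)) := by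
    intro y
    refine (Finset.sum_subset (Finset.subset_univ _) fun v _ hv => ?_).symm
    rw [mem_suppF, not_not] at hv
    rw [hv, zero_smul]
  have hface : ∀ y : ↥K.vertices → ℝ, y ∈ realiz A → (suppF y).map emb ∈ K.faces := by
    intro y hy
    rcases Set.mem_insert_iff.mp hy.2.1 with h0 | hm
    · exfalso
      have hzero : ∑ v : ↥K.vertices, y v = 0 := by
        refine Finset.sum_eq_zero fun v _ => ?_
        by_contra hvy
        have : v ∈ suppF y := mem_suppF.mpr hvy
        rw [h0] at this
        exact Finset.notMem_empty v this
      rw [hy.2.2] at hzero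
      norm_num at hzero
    · exact hm
  have hmemhull : ∀ y : ↥K.vertices → ℝ, y ∈ realiz A →
      φ y ∈ convexHull ℝ (↑((suppF y).map emb) : Set (EuclideanSpace ℝ (Fin N))) := by
    intro y hy
    have hsum1 : ∑ v ∈ suppF y, y v = 1 := by rw [hsupp_sum]; exact hy.2.2
    rw [hφ_supp, ← Finset.centerMass_eq_of_sum_1 _ _ hsum1]
    refine Finset.centerMass_mem_convexHull _ (fun v _ => hy.1 v) (by rw [hsum1]; norm_num)
      fun v hv => ?_
    exact Finset.mem_coe.mpr (Finset.mem_map_of_mem emb hv)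
  have hmemsp : ∀ y : ↥K.vertices → ℝ, y ∈ realiz A → φ y ∈ K.space := by
    intro y hy
    exact Geometry.SimplicialComplex.mem_space_iff.mpr
      ⟨(suppF y).map emb, hface y hy, hmemhull y hy⟩
  -- weights on ambient points
  set wE : (↥K.vertices → ℝ) → EuclideanSpace ℝ (Fin N) → ℝ :=
    fun y e => if he : e ∈ K.vertices then y ⟨e, he⟩ else 0 with hwEdef
  have hwEv : ∀ (y : ↥K.vertices → ℝ) (v : ↥K.vertices), wE y ↑v = y v := by
    intro y v
    simp only [hwEdef]
    rw [dif_pos v.2, Subtype.coe_eta]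
  have hsum_map : ∀ (y : ↥K.vertices → ℝ) (σ : Finset ↥K.vertices),
      ∑ e ∈ σ.map emb, wE y e = ∑ v ∈ σ, y v := by
    intro y σ
    rw [Finset.sum_map]
    exact Finset.sum_congr rfl fun v _ => hwEv y v
  have hsmul_map : ∀ (y : ↥K.vertices → ℝ) (σ : Finset ↥K.vertices),
      ∑ e ∈ σ.map emb, wE y e • e = ∑ v ∈ σ, y v • (v : EuclideanSpace ℝ (Fin N)) := by
    intro y σ
    rw [Finset.sum_map]
    refine Finset.sum_congr rfl fun v _ => ?_
    rw [hembv, hwEv]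
  -- injectivity
  have hinj : ∀ y y' : ↥(realiz A), φ y.1 = φ y'.1 → y = y' := by
    intro y y' hyy
    set σ := suppF y.1 with hσdef
    set τ := suppF y'.1 with hτdef
    have hs : σ.map emb ∈ K.faces := hface y.1 y.2
    have ht : τ.map emb ∈ K.faces := hface y'.1 y'.2
    have hsum1 : ∑ e ∈ σ.map emb, wE y.1 e = 1 := by
      rw [hsum_map, hsupp_sum]; exact y.2.2.2
    have hsum1' : ∑ e ∈ τ.map emb, wE y'.1 e = 1 := by
      rw [hsum_map, hsupp_sum]; exact y'.2.2.2
    have hcomb : ∑ e ∈ σ.map emb, wE y.1 e • e = φ y.1 := by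
      rw [hsmul_map, ← hφ_supp]
    have hcomb' : ∑ e ∈ τ.map emb, wE y'.1 e • e = φ y'.1 := by
      rw [hsmul_map, ← hφ_supp]
    have hps : φ y.1 ∈ convexHull ℝ (↑(σ.map emb) : Set (EuclideanSpace ℝ (Fin N))) :=
      hmemhull y.1 y.2
    have hpt : φ y.1 ∈ convexHull ℝ (↑(τ.map emb) : Set (EuclideanSpace ℝ (Fin N))) := by
      rw [hyy]; exact hmemhull y'.1 y'.2
    have hpint := K.inter_subset_convexHull hs ht ⟨hps, hpt⟩
    rw [← Finset.coe_inter, Finset.convexHull_eq] at hpint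
    obtain ⟨u, hu0, hu1, hup⟩ := hpint
    have hup' : ∑ e ∈ σ.map emb ∩ τ.map emb, u e • e = φ y.1 := by
      rw [Finset.centerMass_eq_of_sum_1 _ id hu1] at hup
      simpa using hup
    set u' : EuclideanSpace ℝ (Fin N) → ℝ := fun e => if e ∈ σ.map emb ∩ τ.map emb then u e
      else 0 with hu'def
    have hu'subset : ∀ t' : Finset (EuclideanSpace ℝ (Fin N)),
        σ.map emb ∩ τ.map emb ⊆ t' →
        (∑ e ∈ t', u' e = ∑ e ∈ σ.map emb ∩ τ.map emb, u e) ∧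
        (∑ e ∈ t', u' e • e = ∑ e ∈ σ.map emb ∩ τ.map emb, u e • e) := by
      intro t' hsub
      constructor
      · rw [← Finset.sum_subset hsub (fun e _ he => by
          simp only [hu'def]; exact if_neg he)]
        exact Finset.sum_congr rfl fun e he => by simp only [hu'def]; exact if_pos he
      · rw [← Finset.sum_subset hsub (fun e _ he => by
          simp only [hu'def]; rw [if_neg he, zero_smul])]
        exact Finset.sum_congr rfl fun e he => by simp only [hu'def]; rw [if_pos he]
    have hsubst : ∀ v ∈ σ, (emb v : EuclideanSpace ℝ (Fin N)) ∈ τ.map emb := by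
      intro v hv
      have h1 := (hu'subset (σ.map emb) Finset.inter_subset_left).1
      have h2 := (hu'subset (σ.map emb) Finset.inter_subset_left).2
      have hequ := uniq (σ.map emb) hs (wE y.1) u' hsum1 (by rw [h1]; exact hu1)
        (by rw [h2, hup']; exact hcomb)
      have hee := hequ (emb v) (Finset.mem_map_of_mem emb hv)
      rw [hembv, hwEv] at hee
      have hyv : y.1 v ≠ 0 := mem_suppF.mp hv
      rw [hee] at hyv
      by_contra hnt
      have hu'v : u' (emb v) = 0 := by
        simp only [hu'def]
        rw [if_neg (by
          rw [Finset.mem_inter]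
          rintro ⟨-, hc⟩
          exact hnt hc)]
      rw [hembv] at hu'v
      exact hyv hu'v
    have hsubts : ∀ v ∈ τ, (emb v : EuclideanSpace ℝ (Fin N)) ∈ σ.map emb := by
      intro v hv
      have h1 := (hu'subset (τ.map emb) Finset.inter_subset_right).1
      have h2 := (hu'subset (τ.map emb) Finset.inter_subset_right).2
      have hequ := uniq (τ.map emb) ht (wE y'.1) u' hsum1' (by rw [h1]; exact hu1)
        (by rw [h2, hup', hyy]; exact hcomb')
      have hee := hequ (emb v) (Finset.mem_map_of_mem emb hv)
      rw [hembv, hwEv] at hee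
      have hyv : y'.1 v ≠ 0 := mem_suppF.mp hv
      rw [hee] at hyv
      by_contra hnt
      have hu'v : u' (emb v) = 0 := by
        simp only [hu'def]
        rw [if_neg (by
          rw [Finset.mem_inter]
          rintro ⟨hc, -⟩
          exact hnt hc)]
      rw [hembv] at hu'v
      exact hyv hu'v
    have hστ : σ = τ := by
      refine Finset.map_injective emb ?_
      apply Finset.Subset.antisymm
      · intro e he
        obtain ⟨v, hv, rfl⟩ := Finset.mem_map.mp he
        exact hsubst v hv
      · intro e he
        obtain ⟨v, hv, rfl⟩ := Finset.mem_map.mp he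
        exact hsubts v hv
    have hequ := uniq (σ.map emb) hs (wE y.1) (wE y'.1) hsum1
      (by rw [hστ]; exact hsum1')
      (by rw [hcomb, hyy, ← hcomb', hστ])
    refine Subtype.ext (funext fun v => ?_)
    by_cases hv : v ∈ σ
    · have := hequ (emb v) (Finset.mem_map_of_mem emb hv)
      rwa [hembv, hwEv, hwEv] at this
    · have h1 : y.1 v = 0 := by
        by_contra hc
        exact hv (mem_suppF.mpr hc)
      have h2 : y'.1 v = 0 := by
        by_contra hc
        exact hv (hστ ▸ mem_suppF.mpr hc)
      rw [h1, h2]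
  -- surjectivity
  have hsurj : ∀ p ∈ K.space, ∃ y ∈ realiz A, φ y = p := by
    intro p hp
    obtain ⟨s, hs, hphull⟩ := Geometry.SimplicialComplex.mem_space_iff.mp hp
    rw [Finset.convexHull_eq] at hphull
    obtain ⟨w, hw0, hw1, hwp⟩ := hphull
    have hwp' : ∑ e ∈ s, w e • e = p := by
      rw [Finset.centerMass_eq_of_sum_1 _ id hw1] at hwp
      simpa using hwp
    set s' := s.filter (fun e => w e ≠ 0) with hs'def
    have hs'sub : s' ⊆ s := Finset.filter_subset _ _
    have hs'sum : ∑ e ∈ s', w e = 1 := by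
      rw [hs'def, Finset.sum_filter_ne_zero]
      exact hw1
    have hs'comb : ∑ e ∈ s', w e • e = p := by
      rw [← hwp']
      refine Finset.sum_subset hs'sub fun e he hne => ?_
      have : w e = 0 := by
        by_contra hc
        exact hne (Finset.mem_filter.mpr ⟨he, hc⟩)
      rw [this, zero_smul]
    have hs'ne : s' ≠ ∅ := by
      intro hc
      rw [hc, Finset.sum_empty] at hs'sum
      norm_num at hs'sum
    have hs'face : s' ∈ K.faces := K.down_closed hs hs'sub (Finset.nonempty_iff_ne_empty.mpr hs'ne)
    have hvert : ∀ e ∈ s', e ∈ K.vertices := by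
      intro e he
      refine Geometry.SimplicialComplex.mem_vertices.mpr ?_
      refine K.down_closed hs'face (Finset.singleton_subset_iff.mpr he) ?_
      simp
    set y : ↥K.vertices → ℝ := fun v => if (v : EuclideanSpace ℝ (Fin N)) ∈ s' then w ↑v else 0
      with hydef
    have hyv : ∀ v : ↥K.vertices, (v : EuclideanSpace ℝ (Fin N)) ∈ s' → y v = w ↑v := by
      intro v hv
      simp only [hydef]
      rw [if_pos hv]
    have hyv0 : ∀ v : ↥K.vertices, (v : EuclideanSpace ℝ (Fin N)) ∉ s' → y v = 0 := by
      intro v hv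
      simp only [hydef]
      rw [if_neg hv]
    have hysupp : (suppF y).map emb = s' := by
      ext e
      constructor
      · intro he
        obtain ⟨v, hv, rfl⟩ := Finset.mem_map.mp he
        have hyne : y v ≠ 0 := mem_suppF.mp hv
        by_contra hc
        rw [hembv] at hc
        exact hyne (hyv0 v hc)
      · intro he
        refine Finset.mem_map.mpr ⟨⟨e, hvert e he⟩, ?_, rfl⟩
        rw [mem_suppF]
        rw [hyv _ he]
        exact (Finset.mem_filter.mp he).2
    have hsuppA : suppF y ∈ A := by
      right
      show (suppF y).map emb ∈ K.faces
      rw [hysupp]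
      exact hs'face
    have hynn : ∀ v, 0 ≤ y v := by
      intro v
      by_cases hv : (v : EuclideanSpace ℝ (Fin N)) ∈ s'
      · rw [hyv v hv]
        exact hw0 _ (hs'sub hv)
      · rw [hyv0 v hv]
    have hmapsum : ∑ v ∈ suppF y, y v = ∑ e ∈ s', w e := by
      rw [← hysupp, Finset.sum_map]
      refine Finset.sum_congr rfl fun v hv => ?_
      have hm : emb v ∈ s' := by
        rw [← hysupp]
        exact Finset.mem_map_of_mem emb hv
      exact hyv v hm
    have hysum : ∑ v : ↥K.vertices, y v = 1 := by
      rw [← hsupp_sum, hmapsum, hs'sum]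
    have hyreal : y ∈ realiz A := ⟨hynn, hsuppA, hysum⟩
    refine ⟨y, hyreal, ?_⟩
    rw [hφ_supp, ← hs'comb, ← hysupp, Finset.sum_map]
    refine Finset.sum_congr rfl fun v hv => ?_
    have hm : emb v ∈ s' := by
      rw [← hysupp]
      exact Finset.mem_map_of_mem emb hv
    rw [hembv, hyv v hm]
  -- assemble the homeomorphism
  haveI : CompactSpace ↥(realiz A) := isCompact_iff_compactSpace.mp (isCompact_realiz hAdown)
  set Φ : ↥(realiz A) → ↥K.space := fun y => ⟨φ y.1, hmemsp y.1 y.2⟩ with hΦdef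
  have hbij : Function.Bijective Φ := by
    constructor
    · intro y y' hyy
      exact hinj y y' (congrArg Subtype.val hyy)
    · intro p
      obtain ⟨y, hy, hyp⟩ := hsurj p.1 p.2
      exact ⟨⟨y, hy⟩, Subtype.ext hyp⟩
  have hcont : Continuous ⇑(Equiv.ofBijective Φ hbij) :=
    Continuous.subtype_mk (hφcont.comp continuous_subtype_val) _
  exact ⟨hcont.homeoOfEquivCompactToT2⟩

/-- Let `K` be a finite geometric simplicial complex in `ℝ^N` whose underlying space is
homeomorphic to the `n`-sphere, and let `T` be the associated abstract simplicial complex on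
the vertex set of `K`. Then the Davis complex `Dav(T)` is a closed connected topological
`(n+1)`-manifold: compact, path-connected, and locally homeomorphic to `ℝ^(n+1)`. -/
theorem davis_closed_manifold (N n : ℕ)
    (K : Geometry.SimplicialComplex ℝ (EuclideanSpace ℝ (Fin N)))
    (hfin : K.faces.Finite)
    (hsphere : Nonempty (↥K.space ≃ₜ ↥(Metric.sphere (0 : EuclideanSpace ℝ (Fin (n + 1))) 1))) :
    let A : Set (Finset ↥K.vertices) :=
      insert ∅ {σ | σ.map (Function.Embedding.subtype _) ∈ K.faces}
    IsCompact (DavSet A) ∧ IsPathConnected (DavSet A) ∧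
      ∀ p : ↥(DavSet A), ∃ U : Set ↥(DavSet A), IsOpen U ∧ p ∈ U ∧
        Nonempty (↥U ≃ₜ EuclideanSpace ℝ (Fin (n + 1))) := by
  intro A
  have hVfin : K.vertices.Finite := by
    have : K.vertices ⊆ ⋃ s ∈ K.faces, (s : Set (EuclideanSpace ℝ (Fin N))) := by
      intro v hv
      exact Set.mem_biUnion hv (by simp)
    exact (hfin.biUnion fun s _ => s.finite_toSet).subset this
  haveI : Fintype ↥K.vertices := hVfin.fintype
  have hA : IsComplex A := by
    refine ⟨Set.mem_insert _ _, ?_, ?_⟩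
    · intro v
      right
      show Finset.map _ _ ∈ K.faces
      simpa [Finset.map_singleton] using (Geometry.SimplicialComplex.mem_vertices.mp v.2)
    · rintro σ (rfl | hσ) τ hτ
      · rw [Finset.subset_empty] at hτ
        subst hτ
        exact Set.mem_insert _ _
      · rcases eq_or_ne τ ∅ with rfl | hne
        · exact Set.mem_insert _ _
        · right
          refine K.down_closed hσ (Finset.map_subset_map.mpr hτ) ?_
          simpa [Finset.nonempty_iff_ne_empty] using hne
  obtain ⟨e⟩ := realiz_homeo N K hfin
  have hsph : ↥(realiz A) ≃ₜ ↥(Metric.sphere (0 : EuclideanSpace ℝ (Fin (n + 1))) 1) :=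
    e.trans hsphere.some
  refine ⟨isCompact_davSet hA.2.2, isPathConnected_davSet hA, fun p => ?_⟩
  obtain ⟨U, hU, hpU, ⟨eU⟩⟩ := chart_homeo hA p
  exact ⟨U, hU, hpU, ⟨eU.trans (ocone_homeo hA.2.2 hA.1 hsph).some⟩⟩
end
end

section
/- Let T be a finite simplicial complex on vertex set V and let S ⊆ T be a full subcomplex with vertex set W ⊆ V (full means: every simplex of T all of whose vertices lie in W belongs to S). For each function ε : V∖W → {-1,+1}, let C_ε = {x ∈ Dav(T) : x_v = ε(v) for every v ∈ V∖W}. Then the 2^(|V|-|W|) sets C_ε are pairwise disjoint, and for each ε the restriction map x ↦ x|_W is a homeomorphism from C_ε onto Dav(S) ⊆ [-1,1]^W. -/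
open scoped Classical

noncomputable section

/-- Let `S` (with faces `FS`, on the vertex set `W ⊆ V`) be a full subcomplex of `T`
(with faces `F`, on `V`). For a sign assignment `ε` on `V∖W`, the slices
`C_ε = {x ∈ Dav(T) | x v = ε v for all v ∉ W}` are pairwise disjoint, and for each `ε` the
coordinate-restriction map `x ↦ x|_W` is a homeomorphism from `C_ε` onto `Dav(S)`. -/
theorem davis_full_subcomplex_slices {V : Type} [Fintype V]
    (F : Set (Finset V)) (hF : IsComplex F)
    (W : Set V) (FS : Set (Finset ↥W)) (hS : IsComplex FS)
    (hsub : ∀ σ ∈ FS, σ.map (Function.Embedding.subtype _) ∈ F)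
    (hfull : ∀ σ ∈ F, ↑σ ⊆ W → ∃ τ ∈ FS, τ.map (Function.Embedding.subtype _) = σ) :
    (∀ ε₁ ε₂ : V → ℝ,
        (∀ v ∉ W, ε₁ v = -1 ∨ ε₁ v = 1) → (∀ v ∉ W, ε₂ v = -1 ∨ ε₂ v = 1) →
        (∃ v ∉ W, ε₁ v ≠ ε₂ v) →
        Disjoint {x ∈ DavSet F | ∀ v ∉ W, x v = ε₁ v}
          {x ∈ DavSet F | ∀ v ∉ W, x v = ε₂ v}) ∧
      ∀ ε : V → ℝ, (∀ v ∉ W, ε v = -1 ∨ ε v = 1) →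
        ∃ h : ↥{x ∈ DavSet F | ∀ v ∉ W, x v = ε v} ≃ₜ ↥(DavSet FS),
          ∀ x, ∀ w : ↥W, (h x : ↥W → ℝ) w = (x : V → ℝ) ↑w := by
  constructor
  · rintro ε₁ ε₂ h₁ h₂ ⟨v, hv, hne⟩
    rw [Set.disjoint_left]
    rintro x ⟨-, hx1⟩ ⟨-, hx2⟩
    exact hne ((hx1 v hv).symm.trans (hx2 v hv))
  · intro ε hε
    have hfwd : ∀ x ∈ {x ∈ DavSet F | ∀ v ∉ W, x v = ε v},
        (fun w : ↥W => x ↑w) ∈ DavSet FS := by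
      rintro x ⟨⟨hIcc, σ, hσF, hσ⟩, hxε⟩
      refine ⟨fun w => hIcc w, ?_⟩
      have hσW : ↑σ ⊆ W := by
        intro v hv
        by_contra hvW
        have h2 := (hσ v).2 hv
        rw [hxε v hvW] at h2
        rcases hε v hvW with h | h
        · exact h2.1 h
        · exact h2.2 h
      obtain ⟨τ, hτFS, hτ⟩ := hfull σ hσF hσW
      refine ⟨τ, hτFS, fun w => (hσ ↑w).trans ?_⟩
      rw [← hτ]
      exact Finset.mem_map' _
    have hbwd : ∀ y ∈ DavSet FS,
        (fun v => if h : v ∈ W then y ⟨v, h⟩ else ε v) ∈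
          {x ∈ DavSet F | ∀ v ∉ W, x v = ε v} := by
      rintro y ⟨hIcc, τ, hτFS, hτ⟩
      refine ⟨⟨?_, τ.map (Function.Embedding.subtype _), hsub τ hτFS, ?_⟩, ?_⟩
      · intro v
        by_cases h : v ∈ W
        · simpa [h] using hIcc ⟨v, h⟩
        · rcases hε v h with he | he <;> simp [h, he] <;> norm_num
      · intro v
        by_cases h : v ∈ W
        · simp only [h, dif_pos]
          refine (hτ ⟨v, h⟩).trans ?_
          constructor
          · intro hm
            exact Finset.mem_map_of_mem _ hm
          · intro hm
            obtain ⟨a, ha, hav⟩ := Finset.mem_map.1 hm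
            have : a = ⟨v, h⟩ := Subtype.ext hav
            exact this ▸ ha
        · simp only [h, dif_neg, not_false_iff]
          constructor
          · intro hne
            rcases hε v h with he | he
            · exact absurd he hne.1
            · exact absurd he hne.2
          · intro hm
            obtain ⟨a, _, hav⟩ := Finset.mem_map.1 hm
            exact absurd (hav ▸ a.2) h
      · intro v hv
        simp [hv]
    let fwd : {x ∈ DavSet F | ∀ v ∉ W, x v = ε v} → DavSet FS :=
      fun x => ⟨fun w => x.1 ↑w, hfwd x.1 x.2⟩
    let bwd : DavSet FS → {x ∈ DavSet F | ∀ v ∉ W, x v = ε v} :=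
      fun y => ⟨fun v => if h : v ∈ W then y.1 ⟨v, h⟩ else ε v, hbwd y.1 y.2⟩
    have hleft : Function.LeftInverse bwd fwd := by
      rintro ⟨x, hx⟩
      apply Subtype.ext
      funext v
      by_cases h : v ∈ W
      · simp [fwd, bwd, h]
      · simp [fwd, bwd, h, hx.2 v h]
    have hright : Function.RightInverse bwd fwd := by
      rintro ⟨y, hy⟩
      apply Subtype.ext
      funext w
      simp [fwd, bwd]
    refine ⟨{ toFun := fwd, invFun := bwd,
              left_inv := hleft, right_inv := hright,
              continuous_toFun := ?_, continuous_invFun := ?_ },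
            fun x w => rfl⟩
    · refine Continuous.subtype_mk ?_ _
      exact continuous_pi fun w =>
        (continuous_apply ((w : V))).comp (continuous_subtype_val :
          Continuous (Subtype.val : {x ∈ DavSet F | ∀ v ∉ W, x v = ε v} → V → ℝ))
    · refine Continuous.subtype_mk (continuous_pi fun v => ?_) _
      by_cases h : v ∈ W
      · simpa [h, Function.comp_def] using (continuous_apply (⟨v, h⟩ : ↥W)).comp continuous_subtype_val
      · simpa [h] using (continuous_const : Continuous fun _ : ↥(DavSet FS) => ε v)
end
end

section
/- Let T be a finite flag simplicial complex on vertex set V and let v ∈ V be a vertex. Then the double T_v of T at v is a flag simplicial complex. -/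
open scoped Classical

noncomputable section

/-- `f₀`: the number of vertices (`0`-simplices) of a family of finsets. -/
def fZero {V : Type*} (F : Set (Finset V)) : ℕ := {σ ∈ F | σ.card = 1}.ncard

/-- `f₁`: the number of edges (`1`-simplices) of a family of finsets. -/
def fOne {V : Type*} (F : Set (Finset V)) : ℕ := {σ ∈ F | σ.card = 2}.ncard

/-- `γ₂(T) = 16 - 5·f₀(T) + f₁(T)`, as an integer. -/
def gammaTwo {V : Type*} (F : Set (Finset V)) : ℤ := 16 - 5 * (fZero F : ℤ) + (fOne F : ℤ)

/-- `T` is a flag simplicial complex: every set of vertices that are pairwise joined by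
`1`-simplices of `T` is itself a simplex of `T`. -/
def IsFlag {V : Type*} (F : Set (Finset V)) : Prop :=
  ∀ σ : Finset V, (∀ u ∈ σ, ({u} : Finset V) ∈ F) →
    (∀ u ∈ σ, ∀ w ∈ σ, u ≠ w → ({u, w} : Finset V) ∈ F) → σ ∈ F

/-- The set of neighbours of the vertex `v` (the vertex set of the link of `v`). -/
def nbrs {V : Type*} [DecidableEq V] (F : Set (Finset V)) (v : V) : Set V :=
  {u | u ≠ v ∧ ({u, v} : Finset V) ∈ F}

/-- The vertex set of the double of a complex `F` at a vertex `v`: the neighbours of `v`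
appear once (with tag `true`), while all other vertices distinct from `v` appear in two
copies, tagged by a Boolean. -/
def DblVtx {V : Type*} [DecidableEq V] (F : Set (Finset V)) (v : V) : Type _ :=
  {p : V × Bool // p.1 ≠ v ∧ (p.1 ∈ nbrs F v → p.2 = true)}

/-- The copy-`i` inclusion of a vertex `u ≠ v` of the antistar of `v` into the double:
it fixes the neighbours of `v` and sends every other vertex to its copy `i`. -/
def inclVtx {V : Type*} [DecidableEq V] (F : Set (Finset V)) (v : V) (i : Bool)
    (u : V) (hu : u ≠ v) : DblVtx F v :=
  ⟨(u, if u ∈ nbrs F v then true else i), hu, fun h => if_pos h⟩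

/-- The copy-`i` image in the double of a simplex `σ` of the antistar of `v`. -/
def inclFace {V : Type*} [DecidableEq V] (F : Set (Finset V)) (v : V) (i : Bool)
    (σ : Finset V) (hσ : v ∉ σ) : Finset (DblVtx F v) :=
  σ.attach.image fun u => inclVtx F v i u.1 (fun h => hσ (h ▸ u.2))

/-- The faces of the double `T_v` of `T` at `v`: the images of the simplices of the antistar
of `v` under the two copy inclusions. -/
def doubleFaces {V : Type*} [DecidableEq V] (F : Set (Finset V)) (v : V) :
    Set (Finset (DblVtx F v)) :=
  {ρ | ∃ (i : Bool) (σ : Finset V) (_ : σ ∈ F) (hv : v ∉ σ), ρ = inclFace F v i σ hv}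

lemma DblVtx.ext' {V : Type} [DecidableEq V] {F : Set (Finset V)} {v : V}
    {p q : DblVtx F v} (h1 : p.1.1 = q.1.1) (h2 : p.1.2 = q.1.2) : p = q :=
  Subtype.ext (Prod.ext_iff.mpr ⟨h1, h2⟩)

lemma mem_inclFace {V : Type} [DecidableEq V] {F : Set (Finset V)} {v : V}
    {i : Bool} {σ : Finset V} {hσ : v ∉ σ} {p : DblVtx F v} :
    p ∈ inclFace F v i σ hσ ↔
      p.1.1 ∈ σ ∧ p.1.2 = (if p.1.1 ∈ nbrs F v then true else i) := by
  constructor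
  · intro hp
    simp only [inclFace, Finset.mem_image, Finset.mem_attach, true_and] at hp
    obtain ⟨u, hu⟩ := hp
    subst hu
    exact ⟨u.2, rfl⟩
  · rintro ⟨h1, h2⟩
    simp only [inclFace, Finset.mem_image, Finset.mem_attach, true_and]
    refine ⟨⟨p.1.1, h1⟩, ?_⟩
    apply DblVtx.ext'
    · rfl
    · exact h2.symm

lemma notMem_image_fst {V : Type} [DecidableEq V] {F : Set (Finset V)} {v : V}
    (S : Finset (DblVtx F v)) : v ∉ S.image (fun p => p.1.1) := by
  simp only [Finset.mem_image, not_exists]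
  rintro p ⟨hp, hpv⟩
  exact p.2.1 hpv

lemma eq_inclFace {V : Type} [DecidableEq V] {F : Set (Finset V)} {v : V}
    (S : Finset (DblVtx F v)) (i₀ : Bool)
    (h : ∀ p ∈ S, p.1.2 = (if p.1.1 ∈ nbrs F v then true else i₀)) :
    S = inclFace F v i₀ (S.image (fun p => p.1.1)) (notMem_image_fst S) := by
  ext p
  rw [mem_inclFace]
  constructor
  · intro hp
    exact ⟨Finset.mem_image_of_mem _ hp, h p hp⟩
  · rintro ⟨h1, h2⟩
    simp only [Finset.mem_image] at h1
    obtain ⟨q, hq, hqp⟩ := h1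
    have hq2 := h q hq
    rw [hqp] at hq2
    have : p = q := DblVtx.ext' hqp.symm (h2.trans hq2.symm)
    rwa [this]

/-- The double `T_v` of a finite flag simplicial complex `T` at a vertex `v` is a flag
simplicial complex. -/
theorem double_isFlag {V : Type} [Fintype V] [DecidableEq V]
    (F : Set (Finset V)) (hF : IsComplex F) (hflag : IsFlag F) (v : V) :
    IsComplex (doubleFaces F v) ∧ IsFlag (doubleFaces F v) := by
  constructor
  · refine ⟨⟨true, ∅, hF.1, Finset.notMem_empty v, ?_⟩, ?_, ?_⟩
    · simp [inclFace]
    · intro w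
      refine ⟨w.1.2, {w.1.1}, hF.2.1 _,
        Finset.notMem_singleton.mpr (fun h => w.2.1 h.symm), ?_⟩
      ext p
      rw [mem_inclFace]
      simp only [Finset.mem_singleton]
      constructor
      · rintro rfl
        refine ⟨rfl, ?_⟩
        by_cases h : p.1.1 ∈ nbrs F v
        · simp [h, p.2.2 h]
        · simp [h]
      · rintro ⟨h1, h2⟩
        refine DblVtx.ext' h1 ?_
        rw [h2, h1]
        by_cases h : w.1.1 ∈ nbrs F v
        · rw [if_pos h, w.2.2 h]
        · rw [if_neg h]
    · rintro ρ ⟨i, σ, hσF, hσv, rfl⟩ τ hτ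
      have hcoh : ∀ p ∈ τ, p.1.2 = (if p.1.1 ∈ nbrs F v then true else i) :=
        fun p hp => (mem_inclFace.mp (hτ hp)).2
      refine ⟨i, τ.image (fun p => p.1.1), ?_, notMem_image_fst τ, eq_inclFace τ i hcoh⟩
      apply hF.2.2 σ hσF
      intro u hu
      simp only [Finset.mem_image] at hu
      obtain ⟨p, hp, rfl⟩ := hu
      exact (mem_inclFace.mp (hτ hp)).1
  · intro S h1 h2
    have hcoh : ∃ i₀ : Bool, ∀ p ∈ S, p.1.2 = (if p.1.1 ∈ nbrs F v then true else i₀) := by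
      by_cases hex : ∃ p ∈ S, p.1.1 ∉ nbrs F v
      · obtain ⟨p₀, hp₀, hn₀⟩ := hex
        refine ⟨p₀.1.2, fun p hp => ?_⟩
        by_cases hn : p.1.1 ∈ nbrs F v
        · simp [hn, p.2.2 hn]
        · rw [if_neg hn]
          by_cases hpq : p = p₀
          · rw [hpq]
          · obtain ⟨j, τ, hτF, hτv, heq⟩ := h2 p hp p₀ hp₀ hpq
            have hpm : p ∈ inclFace F v j τ hτv := heq ▸ (by simp : p ∈ ({p, p₀} : Finset _))
            have hqm : p₀ ∈ inclFace F v j τ hτv := heq ▸ (by simp : p₀ ∈ ({p, p₀} : Finset _))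
            have e1 := (mem_inclFace.mp hpm).2
            have e2 := (mem_inclFace.mp hqm).2
            rw [if_neg hn] at e1
            rw [if_neg hn₀] at e2
            rw [e1, e2]
      · push_neg at hex
        exact ⟨true, fun p hp => by simp [hex p hp, p.2.2 (hex p hp)]⟩
    obtain ⟨i₀, hcoh⟩ := hcoh
    refine ⟨i₀, S.image (fun p => p.1.1), ?_, notMem_image_fst S, eq_inclFace S i₀ hcoh⟩
    apply hflag
    · intro u _; exact hF.2.1 u
    · intro u hu w hw huw
      simp only [Finset.mem_image] at hu hw
      obtain ⟨p, hp, rfl⟩ := hu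
      obtain ⟨q, hq, rfl⟩ := hw
      have hpq : p ≠ q := fun h => huw (by rw [h])
      obtain ⟨j, τ, hτF, hτv, heq⟩ := h2 p hp q hq hpq
      have hpm : p ∈ inclFace F v j τ hτv := heq ▸ (by simp : p ∈ ({p, q} : Finset _))
      have hqm : q ∈ inclFace F v j τ hτv := heq ▸ (by simp : q ∈ ({p, q} : Finset _))
      apply hF.2.2 τ hτF
      intro x hx
      simp only [Finset.mem_insert, Finset.mem_singleton] at hx
      rcases hx with rfl | rfl
      · exact (mem_inclFace.mp hpm).1
      · exact (mem_inclFace.mp hqm).1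
end
end

section
/- Let T be a finite flag simplicial complex on vertex set V, let v ∈ V, and let T_v be the double of T at v. If every 1-simplex of T is contained in a square of T, then every 1-simplex of T_v is contained in a square of T_v. -/
open scoped Classical

noncomputable section

/-- `a, b, c, d` form a square in `F`: four distinct vertices with consecutive pairs joined
by `1`-simplices and the two diagonals not simplices (a full subcomplex isomorphic to a
`4`-cycle). -/
def IsSquareIn {V : Type*} [DecidableEq V] (F : Set (Finset V)) (a b c d : V) : Prop :=
  a ≠ b ∧ a ≠ c ∧ a ≠ d ∧ b ≠ c ∧ b ≠ d ∧ c ≠ d ∧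
    ({a, b} : Finset V) ∈ F ∧ ({b, c} : Finset V) ∈ F ∧ ({c, d} : Finset V) ∈ F ∧
    ({d, a} : Finset V) ∈ F ∧ ({a, c} : Finset V) ∉ F ∧ ({b, d} : Finset V) ∉ F

/-- The `1`-simplex `{x, y}` is contained in a square of `F`. -/
def EdgeInSquare {V : Type*} [DecidableEq V] (F : Set (Finset V)) (x y : V) : Prop :=
  ∃ c d, IsSquareIn F x y c d

section Aux
variable {V : Type} [DecidableEq V] {F : Set (Finset V)} {v : V}

lemma inclVtx_fst (i : Bool) (u : V) (hu : u ≠ v) : (inclVtx F v i u hu).1.1 = u := rfl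

lemma inclVtx_ne {i j : Bool} {a b : V} {ha : a ≠ v} {hb : b ≠ v} (h : a ≠ b) :
    inclVtx F v i a ha ≠ inclVtx F v j b hb := fun e => h (congrArg (fun p => p.1.1) e)

lemma inclVtx_nbr {i j : Bool} {u : V} {hu : u ≠ v} (h : u ∈ nbrs F v) :
    inclVtx F v i u hu = inclVtx F v j u hu := by
  apply Subtype.ext; simp [inclVtx, if_pos h]

lemma inclVtx_copies {i : Bool} {u : V} {hu : u ≠ v} (h : u ∉ nbrs F v) :
    inclVtx F v i u hu ≠ inclVtx F v (!i) u hu := by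
  intro e
  have := congrArg (fun p => p.1.2) e
  simp [inclVtx, if_neg h] at this

lemma inclFace_pair (i : Bool) (a b : V) (h : v ∉ ({a, b} : Finset V))
    (ha : a ≠ v) (hb : b ≠ v) :
    inclFace F v i {a, b} h = {inclVtx F v i a ha, inclVtx F v i b hb} := by
  ext x
  simp only [inclFace, Finset.mem_image, Finset.mem_attach, true_and, Subtype.exists,
    Finset.mem_insert, Finset.mem_singleton]
  constructor
  · rintro ⟨u, rfl | rfl, rfl⟩
    · exact Or.inl rfl
    · exact Or.inr rfl
  · rintro (rfl | rfl)
    · exact ⟨a, Or.inl rfl, rfl⟩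
    · exact ⟨b, Or.inr rfl, rfl⟩

lemma edge_mem {a b : V} (hab : ({a, b} : Finset V) ∈ F) (i : Bool)
    (ha : a ≠ v) (hb : b ≠ v) :
    ({inclVtx F v i a ha, inclVtx F v i b hb} : Finset (DblVtx F v)) ∈ doubleFaces F v := by
  have hv : v ∉ ({a, b} : Finset V) := by
    simp only [Finset.mem_insert, Finset.mem_singleton]
    rintro (rfl | rfl); exacts [ha rfl, hb rfl]
  exact ⟨i, {a, b}, hab, hv, (inclFace_pair i a b hv ha hb).symm⟩

lemma inclFace_image_fst (i : Bool) (σ : Finset V) (hσ : v ∉ σ) :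
    (inclFace F v i σ hσ).image (fun p => p.1.1) = σ := by
  ext u
  simp only [inclFace, Finset.image_image, Finset.mem_image, Finset.mem_attach, true_and,
    Subtype.exists]
  constructor
  · rintro ⟨w, hw, rfl⟩; exact hw
  · intro hu; exact ⟨u, hu, rfl⟩

lemma not_edge {a b : V} (hab : ({a, b} : Finset V) ∉ F) {p q : DblVtx F v}
    (hp : p.1.1 = a) (hq : q.1.1 = b) :
    ({p, q} : Finset (DblVtx F v)) ∉ doubleFaces F v := by
  rintro ⟨i, σ, hσF, hσv, heq⟩
  apply hab
  have : ({p, q} : Finset (DblVtx F v)).image (fun p => p.1.1) = σ := by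
    rw [heq, inclFace_image_fst]
  rw [Finset.image_insert, Finset.image_singleton, hp, hq] at this
  rwa [this]

lemma not_diag {p q : DblVtx F v} (hpq : p ≠ q) (h : p.1.1 = q.1.1) :
    ({p, q} : Finset (DblVtx F v)) ∉ doubleFaces F v := by
  rintro ⟨i, σ, hσF, hσv, heq⟩
  have hp : p ∈ inclFace F v i σ hσv := heq ▸ Finset.mem_insert_self p {q}
  have hq : q ∈ inclFace F v i σ hσv :=
    heq ▸ Finset.mem_insert_of_mem (Finset.mem_singleton_self q)
  simp only [inclFace, Finset.mem_image, Finset.mem_attach, true_and, Subtype.exists] at hp hq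
  obtain ⟨a, ha, rfl⟩ := hp
  obtain ⟨b, hb, rfl⟩ := hq
  have : a = b := h
  subst this
  exact hpq rfl

lemma inclFace_card (i : Bool) (σ : Finset V) (hσ : v ∉ σ) :
    (inclFace F v i σ hσ).card = σ.card := by
  rw [inclFace, Finset.card_image_of_injective _ (fun a b h => Subtype.ext
    (congrArg (fun p : DblVtx F v => p.1.1) h)), Finset.card_attach]

end Aux

section Key
variable {V : Type} [DecidableEq V] {F : Set (Finset V)} {v : V}

lemma key (hsq : ∀ x y : V, x ≠ y → ({x, y} : Finset V) ∈ F → EdgeInSquare F x y)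
    (i : Bool) (x y : V) (hx : x ≠ v) (hy : y ≠ v) (hxy : x ≠ y)
    (hxyF : ({x, y} : Finset V) ∈ F) :
    EdgeInSquare (doubleFaces F v) (inclVtx F v i x hx) (inclVtx F v i y hy) := by
  obtain ⟨c, d, hab, hac, had, hbc, hbd, hcd, e1, e2, e3, e4, n1, n2⟩ := hsq x y hxy hxyF
  have hyxF : ({y, x} : Finset V) ∈ F := by rwa [Finset.pair_comm]
  by_cases hc : c = v
  · subst hc
    have hdc : d ≠ c := hcd.symm
    have hynb : y ∈ nbrs F c := ⟨hbc, e2⟩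
    have hdnb : d ∈ nbrs F c := ⟨hdc, by rwa [Finset.pair_comm]⟩
    have hxnb : x ∉ nbrs F c := fun h => n1 h.2
    have hxdF : ({x, d} : Finset V) ∈ F := by rwa [Finset.pair_comm]
    refine ⟨inclVtx F c (!i) x hx, inclVtx F c i d hdc, inclVtx_ne hxy,
      inclVtx_copies hxnb, inclVtx_ne had, inclVtx_ne hxy.symm, inclVtx_ne hbd,
      inclVtx_ne had, edge_mem hxyF i hx hy, ?_, ?_, edge_mem e4 i hdc hx,
      not_diag (inclVtx_copies hxnb) rfl, not_edge n2 rfl rfl⟩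
    · rw [inclVtx_nbr (j := !i) hynb]
      exact edge_mem hyxF (!i) hy hx
    · rw [inclVtx_nbr (i := i) (j := !i) hdnb]
      exact edge_mem hxdF (!i) hx hdc
  · by_cases hd : d = v
    · subst hd
      have hcnb : c ∈ nbrs F d := ⟨hc, e3⟩
      have hxnb : x ∈ nbrs F d := ⟨hx, by rwa [Finset.pair_comm]⟩
      have hynb : y ∉ nbrs F d := fun h => n2 h.2
      have hcyF : ({c, y} : Finset V) ∈ F := by rwa [Finset.pair_comm]
      have hxvF : ({x, d} : Finset V) ∈ F := by rwa [Finset.pair_comm] -- unused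
      refine ⟨inclVtx F d i c hc, inclVtx F d (!i) y hy, inclVtx_ne hxy,
        inclVtx_ne hac, inclVtx_ne hxy, inclVtx_ne hbc, inclVtx_copies hynb,
        inclVtx_ne hbc.symm, edge_mem hxyF i hx hy, edge_mem e2 i hy hc, ?_, ?_,
        not_edge n1 rfl rfl, not_diag (inclVtx_copies hynb) rfl⟩
      · rw [inclVtx_nbr (i := i) (j := !i) hcnb]
        exact edge_mem hcyF (!i) hc hy
      · rw [inclVtx_nbr (i := i) (j := !i) hxnb]
        exact edge_mem hyxF (!i) hy hx
    · exact ⟨inclVtx F v i c hc, inclVtx F v i d hd, inclVtx_ne hxy, inclVtx_ne hac,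
        inclVtx_ne had, inclVtx_ne hbc, inclVtx_ne hbd, inclVtx_ne hcd,
        edge_mem hxyF i hx hy, edge_mem e2 i hy hc, edge_mem e3 i hc hd,
        edge_mem e4 i hd hx, not_edge n1 rfl rfl, not_edge n2 rfl rfl⟩

/-- If every `1`-simplex of a finite flag simplicial complex `T` is contained in a square of
`T`, then every `1`-simplex of the double `T_v` is contained in a square of `T_v`. -/
theorem double_edges_in_squares {V : Type} [Fintype V] [DecidableEq V]
    (F : Set (Finset V)) (hF : IsComplex F) (hflag : IsFlag F) (v : V)
    (hsq : ∀ x y : V, x ≠ y → ({x, y} : Finset V) ∈ F → EdgeInSquare F x y) :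
    ∀ p q : DblVtx F v, p ≠ q → ({p, q} : Finset (DblVtx F v)) ∈ doubleFaces F v →
      EdgeInSquare (doubleFaces F v) p q := by
  intro p q hpq hmem
  obtain ⟨i, σ, hσF, hσv, hρ⟩ := hmem
  have hcard : σ.card = 2 := by
    have h2 := inclFace_card (F := F) (v := v) i σ hσv
    rw [← hρ, Finset.card_insert_of_notMem (by simpa using hpq),
      Finset.card_singleton] at h2
    omega
  obtain ⟨x, y, hxy, rfl⟩ := Finset.card_eq_two.mp hcard
  have hx : x ≠ v := fun e => hσv (e ▸ Finset.mem_insert_self x {y})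
  have hy : y ≠ v := fun e => hσv (e ▸ Finset.mem_insert_of_mem (Finset.mem_singleton_self y))
  rw [inclFace_pair i x y hσv hx hy] at hρ
  have hp : p = inclVtx F v i x hx ∨ p = inclVtx F v i y hy := by
    have := hρ ▸ Finset.mem_insert_self p {q}
    simpa using this
  have hq : q = inclVtx F v i x hx ∨ q = inclVtx F v i y hy := by
    have := hρ ▸ Finset.mem_insert_of_mem (Finset.mem_singleton_self q)
    simpa using this
  rcases hp with rfl | rfl <;> rcases hq with rfl | rfl
  · exact absurd rfl hpq
  · exact key hsq i x y hx hy hxy hσF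
  · exact key hsq i y x hy hx hxy.symm (by rwa [Finset.pair_comm])
  · exact absurd rfl hpq

end Key
end
end

section
/- Let T be a finite flag simplicial complex on vertex set V, let v ∈ V be a vertex whose link S = Lk(v) satisfies f₁(S) = 3·f₀(S) - 6 (as holds when S is a triangulation of the 2-sphere), and let T_v be the double of T at v. Then γ₂(T_v) = 2·γ₂(T), where γ₂ = 16 - 5·f₀ + f₁. -/
open scoped Classical

noncomputable section

/-- The link of the vertex `v` in `F`. -/
def linkFaces {V : Type*} [DecidableEq V] (F : Set (Finset V)) (v : V) : Set (Finset V) :=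
  {σ | v ∉ σ ∧ insert v σ ∈ F}
namespace DoubleAux

variable {V : Type} [Fintype V] [DecidableEq V] (F : Set (Finset V)) (v : V)

instance : Fintype (DblVtx F v) := by unfold DblVtx; infer_instance

/-- Total version of `inclFace`. -/
def inclF (i : Bool) (σ : Finset V) : Finset (DblVtx F v) :=
  Finset.univ.filter fun x : DblVtx F v =>
    x.1.1 ∈ σ ∧ x.1.2 = (if x.1.1 ∈ nbrs F v then true else i)

lemma mem_inclF {i : Bool} {σ : Finset V} (x : DblVtx F v) :
    x ∈ inclF F v i σ ↔
      x.1.1 ∈ σ ∧ x.1.2 = (if x.1.1 ∈ nbrs F v then true else i) := by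
  simp [inclF]

lemma inclFace_eq_inclF (i : Bool) (σ : Finset V) (hσ : v ∉ σ) :
    inclFace F v i σ hσ = inclF F v i σ := by
  ext x
  rw [mem_inclF]
  simp only [inclFace, Finset.mem_image, Finset.mem_attach, true_and, Subtype.exists]
  constructor
  · rintro ⟨u, hu, rfl⟩
    exact ⟨hu, rfl⟩
  · rintro ⟨h1, h2⟩
    refine ⟨x.1.1, h1, ?_⟩
    apply Subtype.ext
    exact Prod.ext rfl h2.symm

lemma inclF_card {i : Bool} {σ : Finset V} (hσ : v ∉ σ) :
    (inclF F v i σ).card = σ.card := by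
  apply Finset.card_bij (fun (x : DblVtx F v) (_ : x ∈ inclF F v i σ) => x.1.1)
  · intro x hx; exact ((mem_inclF F v x).1 hx).1
  · intro x hx y hy h
    apply Subtype.ext
    apply Prod.ext h
    rw [((mem_inclF F v x).1 hx).2, ((mem_inclF F v y).1 hy).2, h]
  · intro u hu
    refine ⟨⟨(u, if u ∈ nbrs F v then true else i), fun h => hσ (h ▸ hu),
      fun h => if_pos h⟩, ?_, rfl⟩
    refine (mem_inclF F v _).2 ?_
    exact ⟨hu, rfl⟩

lemma inclF_proj {i j : Bool} {σ τ : Finset V} (hσ : v ∉ σ) (hτ : v ∉ τ)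
    (h : inclF F v i σ = inclF F v j τ) : σ = τ := by
  ext u
  constructor
  · intro hu
    have hx : (⟨(u, if u ∈ nbrs F v then true else i), fun hh => hσ (hh ▸ hu),
        fun hh => if_pos hh⟩ : DblVtx F v) ∈ inclF F v i σ :=
      (mem_inclF F v _).2 ⟨hu, rfl⟩
    rw [h] at hx
    exact ((mem_inclF F v _).1 hx).1
  · intro hu
    have hx : (⟨(u, if u ∈ nbrs F v then true else j), fun hh => hτ (hh ▸ hu),
        fun hh => if_pos hh⟩ : DblVtx F v) ∈ inclF F v j τ :=
      (mem_inclF F v _).2 ⟨hu, rfl⟩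
    rw [← h] at hx
    exact ((mem_inclF F v _).1 hx).1

lemma inclF_congr {σ : Finset V} (i j : Bool) (hs : ↑σ ⊆ nbrs F v) :
    inclF F v i σ = inclF F v j σ := by
  ext x
  rw [mem_inclF, mem_inclF]
  constructor <;> rintro ⟨h1, h2⟩ <;>
    · refine ⟨h1, ?_⟩
      rw [if_pos (hs (Finset.mem_coe.2 h1))] at h2 ⊢
      exact h2

lemma inclF_tag {i j : Bool} {σ τ : Finset V} {u : V} (hu : u ∈ σ) (hσ : v ∉ σ)
    (hW : u ∉ nbrs F v) (h : inclF F v i σ = inclF F v j τ) : i = j := by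
  have hx : (⟨(u, i), fun hh => hσ (hh ▸ hu), fun hh => absurd hh hW⟩ : DblVtx F v)
      ∈ inclF F v i σ := (mem_inclF F v _).2 ⟨hu, (if_neg hW).symm⟩
  rw [h] at hx
  have := ((mem_inclF F v _).1 hx).2
  rwa [if_neg hW] at this

end DoubleAux
namespace DoubleAux

set_option linter.unusedSectionVars false

variable {V : Type} [Fintype V] [DecidableEq V] (F : Set (Finset V)) (v : V)

lemma mem_of_ext {s t : Finset V} (hs : s ∈ F) (h : ∀ x, x ∈ s ↔ x ∈ t) : t ∈ F := by
  have hst : s = t := Finset.ext h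
  rwa [hst] at hs

/-- Edges of `F` containing `v`. -/
def Ev : Set (Finset V) := {σ | σ ∈ F ∧ σ.card = 2 ∧ v ∈ σ}

/-- Edges of `F` not containing `v`. -/
def E0 : Set (Finset V) := {σ | σ ∈ F ∧ σ.card = 2 ∧ v ∉ σ}

/-- Edges of `F` inside the link of `v`. -/
def Ein : Set (Finset V) := {σ | σ ∈ F ∧ σ.card = 2 ∧ v ∉ σ ∧ ↑σ ⊆ nbrs F v}

/-- Edges of `F` avoiding `v` and not inside the link of `v`. -/
def Emix : Set (Finset V) := {σ | σ ∈ F ∧ σ.card = 2 ∧ v ∉ σ ∧ ¬ ↑σ ⊆ nbrs F v}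

lemma fZero_eq (hF : IsComplex F) : fZero F = Fintype.card V := by
  have hs : {σ ∈ F | σ.card = 1} = (fun u : V => ({u} : Finset V)) '' Set.univ := by
    ext σ
    simp only [Set.mem_setOf_eq, Set.image_univ, Set.mem_range]
    constructor
    · rintro ⟨-, h1⟩
      obtain ⟨u, rfl⟩ := Finset.card_eq_one.1 h1
      exact ⟨u, rfl⟩
    · rintro ⟨u, rfl⟩
      exact ⟨hF.2.1 u, Finset.card_singleton u⟩
  rw [fZero, hs,
    Set.ncard_image_of_injective _ (fun a b h => Finset.singleton_injective h),
    Set.ncard_univ, Nat.card_eq_fintype_card]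

lemma link_fZero : fZero (linkFaces F v) = (nbrs F v).ncard := by
  have hs : {σ ∈ linkFaces F v | σ.card = 1} =
      (fun u : V => ({u} : Finset V)) '' nbrs F v := by
    ext σ
    constructor
    · rintro ⟨⟨hvσ, hins⟩, h1⟩
      obtain ⟨u, rfl⟩ := Finset.card_eq_one.1 h1
      refine ⟨u, ⟨?_, ?_⟩, rfl⟩
      · rintro rfl; exact hvσ (Finset.mem_singleton_self u)
      · exact mem_of_ext F hins fun x => by simp; tauto
    · rintro ⟨u, ⟨hne, hp⟩, rfl⟩
      refine ⟨⟨?_, ?_⟩, Finset.card_singleton u⟩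
      · simp [Ne.symm hne]
      · exact mem_of_ext F hp fun x => by simp; tauto
  rw [fZero, hs,
    Set.ncard_image_of_injective _ (fun a b h => Finset.singleton_injective h)]

lemma fOne_split : fOne F = (Ev F v).ncard + (E0 F v).ncard := by
  have hs : {σ ∈ F | σ.card = 2} = Ev F v ∪ E0 F v := by
    ext σ
    simp only [Set.mem_setOf_eq, Set.mem_union, Ev, E0]
    by_cases h : v ∈ σ <;> tauto
  rw [fOne, hs, Set.ncard_union_eq ?_ (Set.toFinite _) (Set.toFinite _)]
  exact Set.disjoint_left.2 fun σ hσ hσ' => hσ'.2.2 hσ.2.2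

lemma Ev_ncard : (Ev F v).ncard = (nbrs F v).ncard := by
  have hs : Ev F v = (fun u : V => ({u, v} : Finset V)) '' nbrs F v := by
    ext σ
    constructor
    · rintro ⟨hσF, h2, hvσ⟩
      obtain ⟨a, b, hab, rfl⟩ := Finset.card_eq_two.1 h2
      rcases Finset.mem_insert.1 hvσ with h | h
      · subst h
        refine ⟨b, ⟨fun h => hab h.symm, ?_⟩, ?_⟩
        · rwa [Finset.pair_comm] at hσF
        · exact Finset.pair_comm b v
      · rcases Finset.mem_singleton.1 h with rfl
        exact ⟨a, ⟨hab, hσF⟩, rfl⟩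
    · rintro ⟨u, ⟨hne, hp⟩, rfl⟩
      exact ⟨hp, Finset.card_pair hne,
        Finset.mem_insert_of_mem (Finset.mem_singleton_self v)⟩
  rw [hs]
  apply Set.ncard_image_of_injOn
  intro a ha b hb h
  have h' : ({a, v} : Finset V) = {b, v} := h
  have ha' : a ∈ ({b, v} : Finset V) := h' ▸ Finset.mem_insert_self a {v}
  rcases Finset.mem_insert.1 ha' with h'' | h''
  · exact h''
  · exact absurd (Finset.mem_singleton.1 h'') ha.1

lemma link_fOne (hF : IsComplex F) (hflag : IsFlag F) :
    fOne (linkFaces F v) = (Ein F v).ncard := by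
  have hs : {σ ∈ linkFaces F v | σ.card = 2} = Ein F v := by
    ext σ
    constructor
    · rintro ⟨⟨hvσ, hins⟩, h2⟩
      refine ⟨hF.2.2 _ hins σ (Finset.subset_insert v σ), h2, hvσ, ?_⟩
      intro u hu
      have hu' : u ∈ σ := Finset.mem_coe.1 hu
      refine ⟨fun h => hvσ (h ▸ hu'), ?_⟩
      apply hF.2.2 _ hins
      intro x hx
      rcases Finset.mem_insert.1 hx with rfl | hx'
      · exact Finset.mem_insert_of_mem hu'
      · rw [Finset.mem_singleton.1 hx']
        exact Finset.mem_insert_self v σ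
    · rintro ⟨hσF, h2, hvσ, hsub⟩
      refine ⟨⟨hvσ, ?_⟩, h2⟩
      apply hflag
      · intro u _; exact hF.2.1 u
      · intro u hu w hw huw
        rcases Finset.mem_insert.1 hu with hu1 | hu2
        · rcases Finset.mem_insert.1 hw with hw1 | hw2
          · exact absurd (hu1.trans hw1.symm) huw
          · have hw3 := (hsub (Finset.mem_coe.2 hw2)).2
            refine mem_of_ext F hw3 fun x => ?_
            simp [hu1] <;> tauto
        · rcases Finset.mem_insert.1 hw with hw1 | hw2
          · have hu3 := (hsub (Finset.mem_coe.2 hu2)).2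
            refine mem_of_ext F hu3 fun x => ?_
            simp [hw1] <;> tauto
          · have hp : ({u, w} : Finset V) ∈ F := by
              refine hF.2.2 σ hσF _ ?_
              intro x hx
              rcases Finset.mem_insert.1 hx with rfl | hx'
              · exact hu2
              · rcases Finset.mem_singleton.1 hx' with rfl
                exact hw2
            refine mem_of_ext F hp fun x => ?_
            simp
  rw [fOne, hs]

lemma E0_split : (E0 F v).ncard = (Ein F v).ncard + (Emix F v).ncard := by
  have hs : E0 F v = Ein F v ∪ Emix F v := by
    ext σ
    simp only [Set.mem_setOf_eq, Set.mem_union, E0, Ein, Emix]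
    by_cases h : ↑σ ⊆ nbrs F v <;> tauto
  rw [hs, Set.ncard_union_eq ?_ (Set.toFinite _) (Set.toFinite _)]
  exact Set.disjoint_left.2 fun σ hσ hσ' => hσ'.2.2.2 hσ.2.2.2

end DoubleAux
namespace DoubleAux

set_option linter.unusedSectionVars false

variable {V : Type} [Fintype V] [DecidableEq V] (F : Set (Finset V)) (v : V)

lemma double_fZero (hF : IsComplex F) :
    fZero (doubleFaces F v) = Nat.card (DblVtx F v) := by
  have hs : {ρ ∈ doubleFaces F v | ρ.card = 1} =
      (fun x : DblVtx F v => ({x} : Finset (DblVtx F v))) '' Set.univ := by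
    ext ρ
    constructor
    · rintro ⟨-, h1⟩
      obtain ⟨x, rfl⟩ := Finset.card_eq_one.1 h1
      exact ⟨x, trivial, rfl⟩
    · rintro ⟨x, -, rfl⟩
      refine ⟨⟨x.1.2, {x.1.1}, hF.2.1 _, by simp [Ne.symm x.2.1], ?_⟩,
        Finset.card_singleton _⟩
      rw [inclFace_eq_inclF]
      ext y
      rw [mem_inclF]
      simp only [Finset.mem_singleton]
      constructor
      · rintro rfl
        refine ⟨rfl, ?_⟩
        by_cases h : y.1.1 ∈ nbrs F v
        · rw [if_pos h, y.2.2 h]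
        · rw [if_neg h]
      · rintro ⟨h1, h2⟩
        apply Subtype.ext
        apply Prod.ext h1
        by_cases h : y.1.1 ∈ nbrs F v
        · rw [if_pos h] at h2
          rw [h2, x.2.2 (h1 ▸ h)]
        · rw [if_neg h] at h2
          exact h2
  rw [fZero, hs,
    Set.ncard_image_of_injective _ (fun a b h => Finset.singleton_injective h),
    Set.ncard_univ]

lemma double_fOne (hF : IsComplex F) :
    fOne (doubleFaces F v) = (E0 F v).ncard + (Emix F v).ncard := by
  have hs : {ρ ∈ doubleFaces F v | ρ.card = 2} =
      (inclF F v true '' E0 F v) ∪ (inclF F v false '' Emix F v) := by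
    ext ρ
    constructor
    · rintro ⟨⟨i, σ, hσF, hv, rfl⟩, h2⟩
      rw [inclFace_eq_inclF] at h2 ⊢
      rw [inclF_card F v hv] at h2
      by_cases hsub : ↑σ ⊆ nbrs F v
      · exact Or.inl ⟨σ, ⟨hσF, h2, hv⟩, inclF_congr F v true i hsub⟩
      · cases i with
        | true => exact Or.inl ⟨σ, ⟨hσF, h2, hv⟩, rfl⟩
        | false => exact Or.inr ⟨σ, ⟨hσF, h2, hv, hsub⟩, rfl⟩
    · rintro (⟨σ, ⟨h1, h2, h3⟩, rfl⟩ | ⟨σ, ⟨h1, h2, h3, h4⟩, rfl⟩)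
      · exact ⟨⟨true, σ, h1, h3, (inclFace_eq_inclF F v true σ h3).symm⟩,
          by rw [inclF_card F v h3]; exact h2⟩
      · exact ⟨⟨false, σ, h1, h3, (inclFace_eq_inclF F v false σ h3).symm⟩,
          by rw [inclF_card F v h3]; exact h2⟩
  have hdisj : Disjoint (inclF F v true '' E0 F v) (inclF F v false '' Emix F v) := by
    rw [Set.disjoint_left]
    rintro ρ ⟨σ, ⟨hσ1, hσ2, hσ3⟩, rfl⟩ ⟨τ, ⟨hτ1, hτ2, hτ3, hτ4⟩, heq⟩
    obtain ⟨u, hu, hW⟩ := Set.not_subset.1 hτ4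
    have hστ : σ = τ := inclF_proj F v hσ3 hτ3 heq.symm
    subst hστ
    exact Bool.noConfusion (inclF_tag F v (Finset.mem_coe.1 hu) hσ3 hW heq.symm)
  rw [fOne, hs, Set.ncard_union_eq hdisj (Set.toFinite _) (Set.toFinite _),
    Set.ncard_image_of_injOn (fun σ hσ τ hτ h => inclF_proj F v hσ.2.2 hτ.2.2 h),
    Set.ncard_image_of_injOn (fun σ hσ τ hτ h => inclF_proj F v hσ.2.2.1 hτ.2.2.1 h)]

lemma card_DblVtx :
    Nat.card (DblVtx F v) + 2 + (nbrs F v).ncard = 2 * Fintype.card V := by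
  have h1 : Nat.card (DblVtx F v) =
      ({p : V × Bool | p.1 ≠ v ∧ (p.1 ∈ nbrs F v → p.2 = true)}).ncard :=
    Nat.card_coe_set_eq _
  have h2 : {p : V × Bool | p.1 ≠ v ∧ (p.1 ∈ nbrs F v → p.2 = true)} =
      ↑(Finset.univ.filter fun p : V × Bool => p.1 ≠ v ∧ (p.1 ∈ nbrs F v → p.2 = true)) := by
    ext p; simp
  have h3 : nbrs F v = ↑(Finset.univ.filter fun u : V => u ∈ nbrs F v) := by
    ext u; simp
  have h4 : (nbrs F v).ncard = (Finset.univ.filter fun u : V => u ∈ nbrs F v).card := by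
    conv_lhs => rw [h3]
    rw [Set.ncard_coe_finset]
  rw [h1, h2, Set.ncard_coe_finset, h4]
  have key := Finset.card_filter_add_card_filter_not
    (s := (Finset.univ : Finset (V × Bool)))
    (p := fun p : V × Bool => p.1 ≠ v ∧ (p.1 ∈ nbrs F v → p.2 = true))
  have hneg : (Finset.univ.filter fun p : V × Bool =>
      ¬(p.1 ≠ v ∧ (p.1 ∈ nbrs F v → p.2 = true))) =
      insert (v, true) (insert (v, false)
        ((Finset.univ.filter fun u : V => u ∈ nbrs F v).image fun u => (u, false))) := by
    ext p
    simp only [Finset.mem_filter, Finset.mem_univ, true_and, Finset.mem_insert,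
      Finset.mem_image, not_and, not_forall]
    constructor
    · intro h
      rcases p with ⟨a, b⟩
      by_cases hv : a = v
      · subst hv
        cases b
        · exact Or.inr (Or.inl rfl)
        · exact Or.inl rfl
      · obtain ⟨hW, hb⟩ := h hv
        have hb' : b = false := by
          cases b with
          | false => rfl
          | true => exact absurd rfl hb
        subst hb'
        exact Or.inr (Or.inr ⟨a, hW, rfl⟩)
    · rintro (rfl | rfl | ⟨u, hu, rfl⟩)
      · intro h; exact absurd rfl h
      · intro h; exact absurd rfl h
      · intro _
        exact ⟨hu, Bool.false_ne_true⟩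
  have hnotmem1 : (v, true) ∉ insert (v, false)
      ((Finset.univ.filter fun u : V => u ∈ nbrs F v).image fun u => (u, false)) := by
    simp
  have hnotmem2 : (v, false) ∉
      ((Finset.univ.filter fun u : V => u ∈ nbrs F v).image fun u => (u, false)) := by
    simp only [Finset.mem_image, Finset.mem_filter, Finset.mem_univ, true_and, not_exists]
    rintro u hu
    exact hu.1.1 (congrArg Prod.fst hu.2)
  have hinj : Function.Injective (fun u : V => (u, false)) := by
    intro a b h; exact congrArg Prod.fst h
  rw [hneg, Finset.card_insert_of_notMem hnotmem1,
    Finset.card_insert_of_notMem hnotmem2, Finset.card_image_of_injective _ hinj] at key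
  have huniv : (Finset.univ : Finset (V × Bool)).card = 2 * Fintype.card V := by
    simp [Finset.card_univ, mul_comm]
  omega

end DoubleAux

/-- If `v` is a vertex of a finite flag simplicial complex `T` whose link `S` satisfies
`f₁(S) = 3·f₀(S) - 6` (as holds for triangulations of the `2`-sphere), then the double `T_v`
satisfies `γ₂(T_v) = 2·γ₂(T)`. -/
theorem double_gammaTwo {V : Type} [Fintype V] [DecidableEq V]
    (F : Set (Finset V)) (hF : IsComplex F) (hflag : IsFlag F) (v : V)
    (hlink : (fOne (linkFaces F v) : ℤ) = 3 * (fZero (linkFaces F v) : ℤ) - 6) :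
    gammaTwo (doubleFaces F v) = 2 * gammaTwo F := by
  have h0 := DoubleAux.fZero_eq F hF
  have h1 := DoubleAux.fOne_split F v
  have h2 := DoubleAux.Ev_ncard F v
  have h3 := DoubleAux.link_fZero F v
  have h4 := DoubleAux.link_fOne F v hF hflag
  have h5 := DoubleAux.E0_split F v
  have h6 := DoubleAux.double_fZero F v hF
  have h7 := DoubleAux.card_DblVtx F v
  have h8 := DoubleAux.double_fOne F v hF
  rw [h3, h4] at hlink
  rw [gammaTwo, gammaTwo, h0, h1, h2, h5, h6, h8]
  push_cast
  omega
end
end
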